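/- arXiv:2006.01295 — 8 statements merged into one kernel-verified Lean document; each statement's English description precedes it below -/
import Mathlib

section
/- For every real x ≥ 1, ∫₁ˣ M(x/t) dt = x·m(x) − M(x), where M(u) = Σ_{n≤u} μ(n) and m(u) = Σ_{n≤u} μ(n)/n. -/
open Finset MeasureTheory ArithmeticFunction Real

noncomputable def Mf (x : ℝ) : ℝ := ∑ n ∈ Finset.Icc 1 ⌊x⌋₊, (moebius n : ℝ)

noncomputable def mf (x : ℝ) : ℝ := ∑ n ∈ Finset.Icc 1 ⌊x⌋₊, (moebius n : ℝ) / n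

lemma step_integrable (c a b : ℝ) :
    IntervalIntegrable (Set.indicator (Set.Iic c) (fun _ => (1:ℝ))) volume a b := by
  rw [intervalIntegrable_iff]
  exact ((integrableOn_const_iff (C := (1:ℝ))).mpr (Or.inr measure_Ioc_lt_top)).indicator
    measurableSet_Iic

lemma step_integral {c x : ℝ} (h1 : 1 ≤ c) (h2 : c ≤ x) :
    ∫ t in (1:ℝ)..x, Set.indicator (Set.Iic c) (fun _ => (1:ℝ)) t = c - 1 := by
  rw [intervalIntegral.integral_of_le (h1.trans h2),
      MeasureTheory.setIntegral_indicator measurableSet_Iic]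
  have hset : Set.Ioc (1:ℝ) x ∩ Set.Iic c = Set.Ioc 1 c := by
    ext t
    simp only [Set.mem_inter_iff, Set.mem_Ioc, Set.mem_Iic]
    exact ⟨fun ⟨⟨a, _⟩, b⟩ => ⟨a, b⟩, fun ⟨a, b⟩ => ⟨⟨a, b.trans h2⟩, b⟩⟩
  rw [hset]
  simp [Real.volume_Ioc, ENNReal.toReal_ofReal (by linarith : (0:ℝ) ≤ c - 1), h1]

theorem stmt_1 (x : ℝ) (hx : 1 ≤ x) :
    ∫ t in (1:ℝ)..x, Mf (x / t) = x * mf x - Mf x := by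
  have hx0 : (0:ℝ) < x := lt_of_lt_of_le zero_lt_one hx
  have key : ∀ t ∈ Set.uIcc (1:ℝ) x,
      Mf (x / t) = ∑ n ∈ Finset.Icc 1 ⌊x⌋₊,
        (moebius n : ℝ) * Set.indicator (Set.Iic (x / (n:ℝ))) (fun _ => (1:ℝ)) t := by
    intro t ht
    rw [Set.uIcc_of_le hx] at ht
    obtain ⟨ht1, htx⟩ := ht
    have ht0 : (0:ℝ) < t := lt_of_lt_of_le zero_lt_one ht1
    have hsub : Finset.Icc 1 ⌊x / t⌋₊ ⊆ Finset.Icc 1 ⌊x⌋₊ :=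
      Finset.Icc_subset_Icc_right (Nat.floor_le_floor (div_le_self hx0.le ht1))
    unfold Mf
    rw [← Finset.sum_subset hsub]
    · apply Finset.sum_congr rfl
      intro n hn
      simp only [Finset.mem_Icc] at hn
      have hn0 : (0:ℝ) < n := by exact_mod_cast hn.1
      have hle : (n:ℝ) ≤ x / t := by
        exact_mod_cast (Nat.le_floor_iff (by positivity)).mp hn.2
      have : t ≤ x / n := (le_div_iff₀ hn0).mpr (by
        rw [mul_comm]; exact (le_div_iff₀ ht0).mp hle)
      rw [Set.indicator_of_mem (Set.mem_Iic.mpr this)]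
      ring
    · intro n hn hns
      simp only [Finset.mem_Icc] at hn hns
      have hgt : ⌊x / t⌋₊ < n := by
        by_contra h
        exact hns ⟨hn.1, not_lt.mp h⟩
      have hn0 : (0:ℝ) < n := by exact_mod_cast hn.1
      have : x / t < n := lt_of_not_ge fun h =>
        absurd (Nat.le_floor h) (not_le.mpr hgt)
      have hlt : x / n < t := by
        rw [div_lt_iff₀ hn0, mul_comm, ← div_lt_iff₀ ht0]; exact this
      rw [Set.indicator_of_notMem (by simpa using not_le.mpr hlt)]
      ring
  rw [intervalIntegral.integral_congr key,
      intervalIntegral.integral_finset_sum (fun n _ => (step_integrable _ _ _).const_mul _)]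
  have step : ∀ n ∈ Finset.Icc 1 ⌊x⌋₊,
      (∫ t in (1:ℝ)..x, (moebius n : ℝ) *
        Set.indicator (Set.Iic (x / (n:ℝ))) (fun _ => (1:ℝ)) t)
      = x * ((moebius n : ℝ) / n) - (moebius n : ℝ) := by
    intro n hn
    simp only [Finset.mem_Icc] at hn
    have hn0 : (0:ℝ) < n := by exact_mod_cast hn.1
    have hnx : (n:ℝ) ≤ x := by
      exact_mod_cast (Nat.le_floor_iff hx0.le).mp hn.2
    have h1 : (1:ℝ) ≤ x / n := (one_le_div hn0).mpr hnx
    have h2 : x / n ≤ x := div_le_self hx0.le (by exact_mod_cast hn.1)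
    rw [intervalIntegral.integral_const_mul, step_integral h1 h2]
    field_simp
  rw [Finset.sum_congr rfl step, Finset.sum_sub_distrib, ← Finset.mul_sum]
  rfl
end

section
/- For every real x ≥ 1, ∫₁ˣ m(x/t)/t² dt = m(x) − M(x)/x, where M(u) = Σ_{n≤u} μ(n) and m(u) = Σ_{n≤u} μ(n)/n. -/
open Finset MeasureTheory ArithmeticFunction Real

theorem stmt_2 (x : ℝ) (hx : 1 ≤ x) :
    ∫ t in (1:ℝ)..x, mf (x / t) / t ^ 2 = mf x - Mf x / x := by
  have hx0 : (0:ℝ) < x := lt_of_lt_of_le one_pos hx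
  set F : ℕ → ℝ → ℝ := fun n t =>
    Set.indicator {u : ℝ | u ≤ x / n} (fun u => ((moebius n : ℝ) / n) * u⁻¹ ^ 2) t with hF
  -- pointwise equality on the interval
  have hcong : ∀ t ∈ Set.uIcc (1:ℝ) x, mf (x / t) / t ^ 2 = ∑ n ∈ Finset.Icc 1 ⌊x⌋₊, F n t := by
    intro t ht
    rw [Set.uIcc_of_le hx] at ht
    obtain ⟨ht1, htx⟩ := ht
    have ht0 : (0:ℝ) < t := lt_of_lt_of_le one_pos ht1
    have hsub : Finset.Icc 1 ⌊x / t⌋₊ ⊆ Finset.Icc 1 ⌊x⌋₊ := by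
      apply Finset.Icc_subset_Icc le_rfl
      exact Nat.floor_mono (by
        rw [div_le_iff₀ ht0]
        nlinarith)
    have hzero : ∀ n ∈ Finset.Icc 1 ⌊x⌋₊, n ∉ Finset.Icc 1 ⌊x / t⌋₊ → F n t = 0 := by
      intro n hn hn'
      simp only [Finset.mem_Icc] at hn hn'
      have hn1 : 1 ≤ n := hn.1
      have h1 : ¬ ((n:ℝ) ≤ x / t) := by
        intro h
        exact hn' ⟨hn1, Nat.le_floor h⟩
      have h2 : ¬ (t ≤ x / n) := by
        intro h
        apply h1
        rw [le_div_iff₀ ht0]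
        rw [le_div_iff₀ (show (0:ℝ) < n by exact_mod_cast hn1)] at h
        linarith
      rw [hF]
      simp only [Set.indicator_apply_eq_zero, Set.mem_setOf_eq]
      exact fun h => absurd h h2
    rw [← Finset.sum_subset hsub hzero]
    rw [mf, Finset.sum_div]
    apply Finset.sum_congr rfl
    intro n hn
    simp only [Finset.mem_Icc] at hn
    have hn1 : 1 ≤ n := hn.1
    have hnx : (n : ℝ) ≤ x / t := by
      exact_mod_cast Nat.le_floor_iff (by positivity) |>.mp hn.2
    have hle : t ≤ x / n := by
      rw [le_div_iff₀ (show (0:ℝ) < n by exact_mod_cast hn1)]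
      rw [le_div_iff₀ ht0] at hnx
      linarith
    rw [hF]
    beta_reduce
    rw [Set.indicator_of_mem (show t ∈ {u : ℝ | u ≤ x / (n:ℝ)} from hle)]
    rw [inv_pow, div_eq_mul_inv]
  rw [intervalIntegral.integral_congr hcong]
  -- integrability of each term
  have hint : ∀ n ∈ Finset.Icc 1 ⌊x⌋₊, IntervalIntegrable (F n) volume 1 x := by
    intro n hn
    rw [intervalIntegrable_iff_integrableOn_Ioc_of_le hx]
    apply MeasureTheory.Integrable.indicator _ measurableSet_Iic
    have hc : ContinuousOn (fun u : ℝ => ((moebius n : ℝ) / n) * u⁻¹ ^ 2) (Set.Icc 1 x) := by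
      apply ContinuousOn.mul continuousOn_const
      apply ContinuousOn.pow
      exact ContinuousOn.inv₀ continuousOn_id fun t ht => ne_of_gt (lt_of_lt_of_le one_pos ht.1)
    exact hc.integrableOn_Icc.mono_set Set.Ioc_subset_Icc_self
  rw [intervalIntegral.integral_finset_sum hint]
  -- evaluate each integral
  have heval : ∀ n ∈ Finset.Icc 1 ⌊x⌋₊,
      (∫ t in (1:ℝ)..x, F n t) = (moebius n : ℝ) / n - (moebius n : ℝ) / x := by
    intro n hn
    simp only [Finset.mem_Icc] at hn
    have hn1 : 1 ≤ n := hn.1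
    have hn0 : (0:ℝ) < n := by exact_mod_cast hn1
    have hnx : (n : ℝ) ≤ x := by
      calc (n:ℝ) ≤ ⌊x⌋₊ := by exact_mod_cast hn.2
        _ ≤ x := Nat.floor_le hx0.le
    have hmem : x / n ∈ Set.Icc (1:ℝ) x := by
      constructor
      · rw [le_div_iff₀ hn0]; linarith
      · rw [div_le_iff₀ hn0]
        exact le_mul_of_one_le_right hx0.le (by exact_mod_cast hn1)
    rw [hF]
    rw [intervalIntegral.integral_indicator hmem]
    rw [intervalIntegral.integral_const_mul]
    have key : (∫ t in (1:ℝ)..(x/n), t⁻¹ ^ 2) = 1 - n / x := by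
      have h2 : (∫ t in (1:ℝ)..(x/n), t ^ (-2 : ℤ)) =
          ((x/n) ^ (-1:ℤ) - (1:ℝ) ^ (-1:ℤ)) / (-1) := by
        rw [integral_zpow]
        · norm_num
        · right
          refine ⟨by decide, ?_⟩
          rw [Set.uIcc_of_le hmem.1]
          intro h
          exact absurd h.1 (by norm_num)
      have h3 : ∀ t : ℝ, t⁻¹ ^ 2 = t ^ (-2:ℤ) := by
        intro t
        rw [zpow_neg, ← zpow_natCast]
        norm_num
      simp only [h3]
      rw [h2, show ((x/(n:ℝ)):ℝ) ^ (-1:ℤ) = n/x by rw [zpow_neg_one, inv_div]]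
      norm_num
      ring
    rw [key]
    field_simp
  rw [Finset.sum_congr rfl heval, Finset.sum_sub_distrib]
  rw [mf, Mf, Finset.sum_div]
end

section
/- Let δ : [1,∞) → ℂ be locally integrable. Then for every real x ≥ 1, ∫₁ˣ M(x/t) δ(t) (dt/t) = ∫₁ˣ (Σ_{n≤u} μ(n) δ(u/n)) (du/u), where M(u) = Σ_{n≤u} μ(n). -/
open Finset MeasureTheory ArithmeticFunction Real

theorem stmt_3 (δ : ℝ → ℂ) (hδ : LocallyIntegrableOn δ (Set.Ici 1))
    (x : ℝ) (hx : 1 ≤ x) :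
    ∫ t in (1:ℝ)..x, (Mf (x / t) : ℂ) * δ t / t
      = ∫ u in (1:ℝ)..x, (∑ n ∈ Finset.Icc 1 ⌊u⌋₊, (moebius n : ℂ) * δ (u / n)) / u := by
  have hx0 : (0:ℝ) < x := lt_of_lt_of_le one_pos hx
  set G : ℝ → ℂ := fun t => δ t / t with hGdef
  -- integrability of G on [1, b]
  have hG : ∀ b : ℝ, IntegrableOn G (Set.Icc 1 b) volume := by
    intro b
    have h1 : IntegrableOn δ (Set.Icc 1 b) volume :=
      hδ.integrableOn_compact_subset Set.Icc_subset_Ici_self isCompact_Icc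
    have h2 : ContinuousOn (fun t : ℝ => ((t : ℂ))⁻¹) (Set.Icc 1 b) := by
      apply ContinuousOn.inv₀ Complex.continuous_ofReal.continuousOn
      intro t ht
      simp only [ne_eq, Complex.ofReal_eq_zero]
      intro h; rw [h] at ht; linarith [ht.1]
    have h3 := h1.mul_continuousOn h2 isCompact_Icc
    show IntegrableOn (fun t => δ t / t) (Set.Icc 1 b) volume
    simp only [div_eq_mul_inv]
    exact h3
  have hGi : ∀ b : ℝ, 1 ≤ b → IntervalIntegrable G volume 1 b := by
    intro b hb
    rw [intervalIntegrable_iff, Set.uIoc_of_le hb]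
    exact (hG b).mono_set Set.Ioc_subset_Icc_self
  -- basic facts about n ∈ Icc 1 ⌊x⌋₊
  have hmem : ∀ n ∈ Finset.Icc 1 ⌊x⌋₊, (1:ℝ) ≤ (n:ℝ) ∧ (n:ℝ) ≤ x := by
    intro n hn
    obtain ⟨h1, h2⟩ := Finset.mem_Icc.mp hn
    exact ⟨by exact_mod_cast h1, (Nat.le_floor_iff hx0.le).mp h2⟩
  -- LHS
  have hL1 : Set.EqOn (fun t => (Mf (x / t) : ℂ) * δ t / t)
      (fun t => ∑ n ∈ Finset.Icc 1 ⌊x⌋₊,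
        Set.indicator {s : ℝ | s ≤ x / (n:ℝ)} (fun s => (moebius n : ℂ) * G s) t)
      (Set.uIcc 1 x) := by
    intro t ht
    rw [Set.uIcc_of_le hx] at ht
    obtain ⟨ht1, htx⟩ := ht
    have ht0 : 0 < t := lt_of_lt_of_le one_pos ht1
    have hfloor : Finset.Icc 1 ⌊x / t⌋₊
        = (Finset.Icc 1 ⌊x⌋₊).filter (fun n : ℕ => t ≤ x / (n:ℝ)) := by
      ext n
      simp only [Finset.mem_filter, Finset.mem_Icc]
      constructor
      · rintro ⟨h1, h2⟩
        have hnn : (0:ℝ) < n := by exact_mod_cast h1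
        have hn : (n:ℝ) ≤ x / t := (Nat.le_floor_iff (by positivity)).mp h2
        have hnt : (n:ℝ) * t ≤ x := (le_div_iff₀ ht0).mp hn
        have hnx : (n:ℝ) ≤ x := le_trans (le_mul_of_one_le_right hnn.le ht1) hnt
        exact ⟨⟨h1, Nat.le_floor hnx⟩, (le_div_iff₀ hnn).mpr (by linarith [mul_comm (n:ℝ) t])⟩
      · rintro ⟨⟨h1, _⟩, h3⟩
        have hnn : (0:ℝ) < n := by exact_mod_cast h1
        have hnt : t * (n:ℝ) ≤ x := (le_div_iff₀ hnn).mp h3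
        refine ⟨h1, Nat.le_floor ?_⟩
        rw [le_div_iff₀ ht0]
        linarith [mul_comm (n:ℝ) t]
    show (Mf (x / t) : ℂ) * δ t / t = _
    rw [Mf]
    push_cast
    rw [hfloor, Finset.sum_filter, Finset.sum_mul, Finset.sum_div]
    refine Finset.sum_congr rfl fun n _ => ?_
    by_cases h : t ≤ x / (n:ℝ)
    · simp [Set.indicator_apply, h, mul_div_assoc, hGdef]
    · simp [Set.indicator_apply, h]
  have hL2 : ∀ n ∈ Finset.Icc 1 ⌊x⌋₊,
      IntervalIntegrable (Set.indicator {s : ℝ | s ≤ x / (n:ℝ)}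
        (fun s => (moebius n : ℂ) * G s)) volume 1 x := by
    intro n hn
    rw [show {s : ℝ | s ≤ x / (n:ℝ)} = Set.Iic (x / (n:ℝ)) from rfl]
    rw [intervalIntegrable_iff, Set.uIoc_of_le hx, IntegrableOn,
      integrable_indicator_iff (measurableSet_Iic : MeasurableSet (Set.Iic (x / (n:ℝ)))),
      IntegrableOn, Measure.restrict_restrict (measurableSet_Iic : MeasurableSet (Set.Iic (x / (n:ℝ))))]
    refine MeasureTheory.IntegrableOn.mono_set (((hG (x / n)).const_mul ((moebius n : ℂ)))) ?_
    rintro v ⟨hv1, hv2⟩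
    exact ⟨hv2.1.le, hv1⟩
  have hL3 : (∫ t in (1:ℝ)..x, (Mf (x / t) : ℂ) * δ t / t)
      = ∑ n ∈ Finset.Icc 1 ⌊x⌋₊, ((moebius n : ℂ) * ∫ t in (1:ℝ)..(x / (n:ℝ)), G t) := by
    rw [intervalIntegral.integral_congr hL1, intervalIntegral.integral_finset_sum hL2]
    refine Finset.sum_congr rfl fun n hn => ?_
    obtain ⟨hn1, hnx⟩ := hmem n hn
    have hn0 : (0:ℝ) < n := lt_of_lt_of_le one_pos hn1
    have h1n : (1:ℝ) ≤ x / n := (one_le_div hn0).mpr hnx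
    have hxn : x / (n:ℝ) ≤ x := div_le_self hx0.le hn1
    rw [intervalIntegral.integral_indicator ⟨h1n, hxn⟩, intervalIntegral.integral_const_mul]
  -- RHS
  have hR1 : Set.EqOn (fun u => (∑ n ∈ Finset.Icc 1 ⌊u⌋₊, (moebius n : ℂ) * δ (u / n)) / u)
      (fun u => ∑ n ∈ Finset.Icc 1 ⌊x⌋₊,
        Set.indicator (Set.Ici ((n:ℝ))) (fun v => (moebius n : ℂ) * G (v / n) / n) u)
      (Set.uIcc 1 x) := by
    intro u hu
    rw [Set.uIcc_of_le hx] at hu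
    obtain ⟨hu1, hux⟩ := hu
    have hu0 : 0 < u := lt_of_lt_of_le one_pos hu1
    have hfloor : Finset.Icc 1 ⌊u⌋₊
        = (Finset.Icc 1 ⌊x⌋₊).filter (fun n : ℕ => (n:ℝ) ≤ u) := by
      ext n
      simp only [Finset.mem_filter, Finset.mem_Icc]
      constructor
      · rintro ⟨h1, h2⟩
        have hnu : (n:ℝ) ≤ u := (Nat.le_floor_iff hu0.le).mp h2
        exact ⟨⟨h1, Nat.le_floor (hnu.trans hux)⟩, hnu⟩
      · rintro ⟨⟨h1, _⟩, h3⟩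
        exact ⟨h1, Nat.le_floor h3⟩
    show (∑ n ∈ Finset.Icc 1 ⌊u⌋₊, (moebius n : ℂ) * δ (u / n)) / u = _
    rw [hfloor, Finset.sum_filter, Finset.sum_div]
    refine Finset.sum_congr rfl fun n hn => ?_
    obtain ⟨hn1, hnx⟩ := hmem n hn
    have hn0 : ((n:ℝ)) ≠ 0 := by positivity
    by_cases h : (n:ℝ) ≤ u
    · have hne : n ≠ 0 := by
        intro hh; rw [hh] at hn1; norm_num at hn1
      have hn0c : ((n:ℕ):ℂ) ≠ 0 := Nat.cast_ne_zero.mpr hne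
      have hu0c : (u:ℂ) ≠ 0 := Complex.ofReal_ne_zero.mpr hu0.ne'
      simp only [Set.indicator_apply, Set.mem_Ici, h, if_true, hGdef]
      push_cast
      field_simp
    · simp [Set.indicator_apply, h]
  have hR2 : ∀ n ∈ Finset.Icc 1 ⌊x⌋₊,
      IntervalIntegrable (Set.indicator (Set.Ici ((n:ℝ)))
        (fun v => (moebius n : ℂ) * G (v / n) / n)) volume 1 x := by
    intro n hn
    obtain ⟨hn1, hnx⟩ := hmem n hn
    have hn0 : (0:ℝ) < n := lt_of_lt_of_le one_pos hn1
    have h1n : (1:ℝ) ≤ x / n := (one_le_div hn0).mpr hnx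
    have hH : IntervalIntegrable (fun v => (moebius n : ℂ) * G (v / n) / n) volume n x := by
      have h2 := (hGi (x / n) h1n).comp_mul_right (c := (n:ℝ)⁻¹)
      have h3 : IntervalIntegrable (fun v => G (v / n)) volume n x := by
        have e1 : (1:ℝ) / ((n:ℝ)⁻¹) = n := by field_simp
        have e2 : (x / (n:ℝ)) / ((n:ℝ)⁻¹) = x := by field_simp
        rw [e1, e2] at h2
        simpa [div_eq_mul_inv] using h2
      exact (h3.const_mul _).div_const _
    rw [intervalIntegrable_iff, Set.uIoc_of_le hx, IntegrableOn,
      integrable_indicator_iff measurableSet_Ici, IntegrableOn,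
      Measure.restrict_restrict measurableSet_Ici]
    have h4 : IntegrableOn (fun v => (moebius n : ℂ) * G (v / n) / n) (Set.Icc (n:ℝ) x) volume := by
      have := (intervalIntegrable_iff' (f := fun v => (moebius n : ℂ) * G (v / n) / n) (a := (n:ℝ)) (b := x) (μ := volume)).mp hH
      rwa [Set.uIcc_of_le hnx] at this
    exact h4.mono_set (fun v hv => ⟨hv.1, hv.2.2⟩)
  have hR3 : (∫ u in (1:ℝ)..x, (∑ n ∈ Finset.Icc 1 ⌊u⌋₊, (moebius n : ℂ) * δ (u / n)) / u)
      = ∑ n ∈ Finset.Icc 1 ⌊x⌋₊, ((moebius n : ℂ) * ∫ t in (1:ℝ)..(x / (n:ℝ)), G t) := by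
    rw [intervalIntegral.integral_congr hR1, intervalIntegral.integral_finset_sum hR2]
    refine Finset.sum_congr rfl fun n hn => ?_
    obtain ⟨hn1, hnx⟩ := hmem n hn
    have hn0 : (0:ℝ) < n := lt_of_lt_of_le one_pos hn1
    have hn0' : ((n:ℝ)) ≠ 0 := hn0.ne'
    -- reduce the indicator integral to ∫ n..x
    have step1 : (∫ u in (1:ℝ)..x, Set.indicator (Set.Ici ((n:ℝ)))
          (fun v => (moebius n : ℂ) * G (v / n) / n) u)
        = ∫ u in (n:ℝ)..x, (moebius n : ℂ) * G (u / n) / n := by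
      rw [intervalIntegral.integral_of_le hx, intervalIntegral.integral_of_le hnx]
      rw [MeasureTheory.integral_indicator measurableSet_Ici,
        Measure.restrict_restrict measurableSet_Ici]
      apply setIntegral_congr_set
      rw [MeasureTheory.ae_eq_set]
      constructor
      · refine measure_mono_null ?_ (Real.volume_singleton (a := (n:ℝ)))
        rintro v ⟨⟨hv1, hv2, hv3⟩, hv4⟩
        simp only [Set.mem_Ioc, not_and, not_le] at hv4
        simp only [Set.mem_singleton_iff]
        by_contra hne
        exact absurd (hv4 (lt_of_le_of_ne hv1 (Ne.symm hne))) (not_lt.mpr hv3)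
      · rw [Set.diff_eq_empty.mpr, measure_empty]
        rintro v ⟨hv1, hv2⟩
        exact ⟨hv1.le, lt_of_le_of_lt hn1 hv1, hv2⟩
    rw [step1]
    -- change of variables u = n t
    have hcd := intervalIntegral.integral_comp_div
      (f := fun t => (moebius n : ℂ) * G t / n) (a := (n:ℝ)) (b := x) (c := (n:ℝ)) hn0'
    simp only [div_self hn0'] at hcd
    rw [hcd, intervalIntegral.integral_div, intervalIntegral.integral_const_mul]
    have hn0'' : ((n:ℝ):ℂ) ≠ 0 := by exact_mod_cast hn0'
    rw [Complex.real_smul]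
    rw [← mul_div_assoc]
    exact mul_div_cancel_left₀ _ hn0''
  rw [hL3, hR3]
end

section
/- Let δ : [1,∞) → ℂ be locally integrable and define δ₁(t) = Σ_{k≤t} δ(t/k). Then for every real x ≥ 1, ∫₁ˣ M(x/t) δ₁(t) (dt/t) = ∫₁ˣ δ(u) (du/u). -/
open Finset MeasureTheory ArithmeticFunction Real

section Aux

variable {δ δ₁ : ℝ → ℂ}

lemma g_int (hδ : LocallyIntegrableOn δ (Set.Ici 1)) : ∀ {a b : ℝ}, 1 ≤ a → 1 ≤ b →
    IntervalIntegrable (fun u => δ u / u) volume a b := by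
  have main : ∀ {a b : ℝ}, 1 ≤ a → 1 ≤ b → a ≤ b →
      IntervalIntegrable (fun u => δ u / u) volume a b := by
    intro a b ha hb hab
    have hsub : Set.Icc a b ⊆ Set.Ici 1 := fun y hy => le_trans ha hy.1
    have h1 : IntegrableOn δ (Set.Icc a b) := hδ.integrableOn_compact_subset hsub isCompact_Icc
    rw [intervalIntegrable_iff_integrableOn_Icc_of_le hab]
    have hmeas : AEStronglyMeasurable (fun u : ℝ => δ u / u)
        (volume.restrict (Set.Icc a b)) := by
      have hc : ContinuousOn (fun u : ℝ => ((u : ℂ))⁻¹) (Set.Icc a b) := by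
        apply ContinuousOn.inv₀ (Complex.continuous_ofReal.continuousOn)
        intro u hu
        simp only [ne_eq, Complex.ofReal_eq_zero]
        exact ne_of_gt (lt_of_lt_of_le one_pos (le_trans ha hu.1))
      simpa [div_eq_mul_inv, Pi.mul_def] using
        h1.aestronglyMeasurable.mul (hc.aestronglyMeasurable measurableSet_Icc)
    apply (h1.norm.mono' hmeas ?_ : IntegrableOn _ _ _)
    filter_upwards [ae_restrict_mem measurableSet_Icc] with u hu
    have hu1 : (1:ℝ) ≤ u := le_trans ha hu.1
    have : ‖(u:ℂ)‖ = u := by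
      rw [Complex.norm_real, Real.norm_eq_abs, abs_of_nonneg (by linarith)]
    rw [norm_div, this]
    calc ‖δ u‖ / u ≤ ‖δ u‖ / 1 := by
          apply div_le_div_of_nonneg_left (norm_nonneg _) one_pos hu1
      _ = ‖δ u‖ := div_one _
  intro a b ha hb
  rcases le_total a b with h | h
  · exact main ha hb h
  · exact (main hb ha h).symm

lemma gk_fun_eq (δ : ℝ → ℂ) (k : ℕ) (hk : 1 ≤ k) :
    (fun t : ℝ => δ (t / k) / t)
      = fun t : ℝ => (k:ℝ)⁻¹ • ((fun u : ℝ => δ u / u) (t * (k:ℝ)⁻¹)) := by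
  have hk0 : (0:ℝ) < k := by exact_mod_cast hk
  have hne : (k:ℝ) ≠ 0 := ne_of_gt hk0
  have hneC : ((k:ℝ):ℂ) ≠ 0 := by exact_mod_cast hne
  funext t
  rcases eq_or_ne t 0 with rfl | ht
  · simp
  · have htC : ((t:ℝ):ℂ) ≠ 0 := by exact_mod_cast ht
    simp only [Complex.real_smul, div_eq_mul_inv]
    have h1 : ((k:ℕ):ℂ) ≠ 0 := by exact_mod_cast hne
    push_cast
    field_simp

lemma gk_int (hδ : LocallyIntegrableOn δ (Set.Ici 1)) (k : ℕ) (hk : 1 ≤ k) {a b : ℝ}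
    (ha : (k:ℝ) ≤ a) (hb : (k:ℝ) ≤ b) :
    IntervalIntegrable (fun t => δ (t / k) / t) volume a b := by
  have hk0 : (0:ℝ) < k := by exact_mod_cast hk
  have hne : (k:ℝ) ≠ 0 := ne_of_gt hk0
  have h1a : (1:ℝ) ≤ a / k := (one_le_div hk0).2 ha
  have h1b : (1:ℝ) ≤ b / k := (one_le_div hk0).2 hb
  have base : IntervalIntegrable (fun u => δ u / u) volume (a/k) (b/k) := g_int hδ h1a h1b
  have comp := (base.comp_mul_right (c := (k:ℝ)⁻¹)).smul ((k:ℝ)⁻¹)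
  have e1 : a / (k:ℝ) / (k:ℝ)⁻¹ = a := by field_simp
  have e2 : b / (k:ℝ) / (k:ℝ)⁻¹ = b := by field_simp
  rw [e1, e2] at comp
  rw [gk_fun_eq δ k hk]
  exact comp

lemma g_subst (hδ : LocallyIntegrableOn δ (Set.Ici 1)) (k : ℕ) (hk : 1 ≤ k) {b : ℝ}
    (hb : (k:ℝ) ≤ b) :
    ∫ t in (k:ℝ)..b, δ (t / k) / t = ∫ u in (1:ℝ)..(b / k), δ u / u := by
  have hk0 : (0:ℝ) < k := by exact_mod_cast hk
  have hne : (k:ℝ) ≠ 0 := ne_of_gt hk0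
  have h := intervalIntegral.integral_comp_div (a := (k:ℝ)) (b := b)
    (fun u => δ u / u) hne
  rw [div_self hne] at h
  have e : (fun t : ℝ => δ (t / k) / t)
      = fun t : ℝ => (k:ℝ)⁻¹ • ((fun u : ℝ => δ u / u) (t / k)) := by
    rw [gk_fun_eq δ k hk]
    funext t
    rw [div_eq_mul_inv]
  rw [e, intervalIntegral.integral_smul, h, smul_smul, inv_mul_cancel₀ hne, one_smul]

lemma ind_int (hδ : LocallyIntegrableOn δ (Set.Ici 1)) (k : ℕ) (hk : 1 ≤ k) {a c : ℝ}
    (ha : 1 ≤ a) (hc : a ≤ c) :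
    IntervalIntegrable (fun t => if (k:ℝ) ≤ t then δ (t / k) / t else 0) volume a c := by
  by_cases hkc : (k:ℝ) ≤ c
  · by_cases hka : (k:ℝ) ≤ a
    · -- condition true on all of [a,c]
      rw [intervalIntegrable_iff]
      refine ((gk_int hδ k hk hka hkc).def'.congr_fun ?_ measurableSet_uIoc)
      intro t ht
      rw [Set.uIoc_of_le hc] at ht
      simp [le_trans hka (le_of_lt ht.1)]
    · push_neg at hka
      have h1 : IntervalIntegrable (fun t => if (k:ℝ) ≤ t then δ (t / k) / t else 0)
          volume a k := by
        rw [intervalIntegrable_iff, Set.uIoc_of_le (le_of_lt hka)]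
        have h0 : IntegrableOn (fun _ : ℝ => (0:ℂ)) (Set.Ioc a (k:ℝ)) volume :=
          integrableOn_zero
        refine (h0.congr (Filter.EventuallyEq.symm ?_))
        have hne : ∀ᵐ t : ℝ ∂volume.restrict (Set.Ioc a (k:ℝ)), t ≠ (k:ℝ) :=
          ae_restrict_of_ae (by
            rw [ae_iff]
            have : {t : ℝ | ¬ t ≠ (k:ℝ)} = {(k:ℝ)} := by ext t; simp
            rw [this]
            exact Real.volume_singleton)
        filter_upwards [hne, ae_restrict_mem measurableSet_Ioc] with t h1 h2
        have : ¬ (k:ℝ) ≤ t := by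
          rcases lt_or_eq_of_le h2.2 with h | h
          · exact not_le.2 h
          · exact absurd h h1
        simp [this]
      have h2 : IntervalIntegrable (fun t => if (k:ℝ) ≤ t then δ (t / k) / t else 0)
          volume k c := by
        rw [intervalIntegrable_iff]
        refine ((gk_int hδ k hk (le_refl _) hkc).def'.congr_fun ?_ measurableSet_uIoc)
        intro t ht
        rw [Set.uIoc_of_le hkc] at ht
        simp [le_of_lt ht.1]
      exact h1.trans h2
  · push_neg at hkc
    rw [intervalIntegrable_iff, Set.uIoc_of_le hc]
    have h0 : IntegrableOn (fun _ : ℝ => (0:ℂ)) (Set.Ioc a c) volume := integrableOn_zero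
    refine h0.congr_fun ?_ measurableSet_Ioc
    intro t ht
    have : ¬ (k:ℝ) ≤ t := not_le.2 (lt_of_le_of_lt ht.2 hkc)
    simp [this]

lemma ind_eval (hδ : LocallyIntegrableOn δ (Set.Ici 1)) (k : ℕ) (hk : 1 ≤ k) {c : ℝ}
    (hc : 1 ≤ c) :
    ∫ t in (1:ℝ)..c, (if (k:ℝ) ≤ t then δ (t / k) / t else 0) =
      if (k:ℝ) ≤ c then ∫ u in (1:ℝ)..(c / k), δ u / u else 0 := by
  have hk1 : (1:ℝ) ≤ (k:ℝ) := by exact_mod_cast hk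
  by_cases hkc : (k:ℝ) ≤ c
  · rw [if_pos hkc]
    have i1 := ind_int hδ k hk (le_refl (1:ℝ)) hk1
    have i2 := ind_int hδ k hk hk1 hkc
    rw [← intervalIntegral.integral_add_adjacent_intervals i1 i2]
    have e1 : ∫ t in (1:ℝ)..(k:ℝ), (if (k:ℝ) ≤ t then δ (t / k) / t else 0) = 0 := by
      have : (∫ t in (1:ℝ)..(k:ℝ), (if (k:ℝ) ≤ t then δ (t / k) / t else 0))
          = ∫ _ in (1:ℝ)..(k:ℝ), (0:ℂ) := by
        apply intervalIntegral.integral_congr_ae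
        have hne : ∀ᵐ t : ℝ ∂volume, t ≠ (k:ℝ) := by
          rw [ae_iff]
          have : {t : ℝ | ¬ t ≠ (k:ℝ)} = {(k:ℝ)} := by ext t; simp
          rw [this]
          exact Real.volume_singleton
        filter_upwards [hne] with t ht hmem
        rw [Set.uIoc_of_le hk1] at hmem
        have : ¬ (k:ℝ) ≤ t := by
          rcases lt_or_eq_of_le hmem.2 with h | h
          · exact not_le.2 h
          · exact absurd h ht
        simp [this]
      rw [this, intervalIntegral.integral_zero]
    have e2 : ∫ t in (k:ℝ)..c, (if (k:ℝ) ≤ t then δ (t / k) / t else 0)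
        = ∫ u in (1:ℝ)..(c / k), δ u / u := by
      rw [← g_subst hδ k hk hkc]
      apply intervalIntegral.integral_congr
      intro t ht
      rw [Set.uIcc_of_le hkc] at ht
      simp [ht.1]
    rw [e1, e2, zero_add]
  · rw [if_neg hkc]
    have : (∫ t in (1:ℝ)..c, (if (k:ℝ) ≤ t then δ (t / k) / t else 0))
        = ∫ _ in (1:ℝ)..c, (0:ℂ) := by
      apply intervalIntegral.integral_congr
      intro t ht
      rw [Set.uIcc_of_le hc] at ht
      have : ¬ (k:ℝ) ≤ t := fun h => hkc (le_trans h ht.2)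
      simp [this]
    rw [this, intervalIntegral.integral_zero]

lemma d1_rep (hδ₁ : ∀ t : ℝ, δ₁ t = ∑ k ∈ Finset.Icc 1 ⌊t⌋₊, δ (t / k)) {c : ℝ}
    (hc : 1 ≤ c) {t : ℝ} (ht : t ∈ Set.Icc 1 c) :
    δ₁ t / t = ∑ k ∈ Finset.Icc 1 ⌊c⌋₊, (if (k:ℝ) ≤ t then δ (t / k) / t else 0) := by
  have ht0 : (0:ℝ) ≤ t := le_trans zero_le_one ht.1
  rw [hδ₁ t, Finset.sum_div]
  have step1 : ∑ k ∈ Finset.Icc 1 ⌊t⌋₊, δ (t / k) / t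
      = ∑ k ∈ Finset.Icc 1 ⌊t⌋₊, (if (k:ℝ) ≤ t then δ (t / k) / t else 0) := by
    apply Finset.sum_congr rfl
    intro k hk
    rw [Finset.mem_Icc] at hk
    have : (k:ℝ) ≤ t := le_trans (by exact_mod_cast hk.2) (Nat.floor_le ht0)
    rw [if_pos this]
  rw [step1]
  apply Finset.sum_subset
  · exact Finset.Icc_subset_Icc_right (Nat.floor_le_floor ht.2)
  · intro k hk hk'
    rw [Finset.mem_Icc] at hk hk'
    have : ¬ (k:ℝ) ≤ t := by
      intro h
      exact hk' ⟨hk.1, Nat.le_floor h⟩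
    rw [if_neg this]

lemma d1_int (hδ : LocallyIntegrableOn δ (Set.Ici 1))
    (hδ₁ : ∀ t : ℝ, δ₁ t = ∑ k ∈ Finset.Icc 1 ⌊t⌋₊, δ (t / k)) {c : ℝ} (hc : 1 ≤ c) :
    IntervalIntegrable (fun t => δ₁ t / t) volume 1 c := by
  rw [intervalIntegrable_iff, Set.uIoc_of_le hc]
  have hsum : IntegrableOn
      (fun t => ∑ k ∈ Finset.Icc 1 ⌊c⌋₊, (if (k:ℝ) ≤ t then δ (t / k) / t else 0))
      (Set.Ioc 1 c) volume := by
    apply integrable_finset_sum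
    intro k hk
    have hk1 : 1 ≤ k := (Finset.mem_Icc.1 hk).1
    have := ind_int hδ k hk1 (le_refl (1:ℝ)) hc
    rw [intervalIntegrable_iff, Set.uIoc_of_le hc] at this
    exact this
  refine hsum.congr_fun ?_ measurableSet_Ioc
  intro t ht
  exact (d1_rep hδ₁ hc ⟨le_of_lt ht.1, ht.2⟩).symm

lemma d1_eval (hδ : LocallyIntegrableOn δ (Set.Ici 1))
    (hδ₁ : ∀ t : ℝ, δ₁ t = ∑ k ∈ Finset.Icc 1 ⌊t⌋₊, δ (t / k)) {c : ℝ} (hc : 1 ≤ c) :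
    ∫ t in (1:ℝ)..c, δ₁ t / t
      = ∑ k ∈ Finset.Icc 1 ⌊c⌋₊, ∫ u in (1:ℝ)..(c / k), δ u / u := by
  have e0 : (∫ t in (1:ℝ)..c, δ₁ t / t)
      = ∫ t in (1:ℝ)..c,
          ∑ k ∈ Finset.Icc 1 ⌊c⌋₊, (if (k:ℝ) ≤ t then δ (t / k) / t else 0) := by
    apply intervalIntegral.integral_congr
    intro t ht
    rw [Set.uIcc_of_le hc] at ht
    exact d1_rep hδ₁ hc ht
  rw [e0, intervalIntegral.integral_finset_sum]
  · apply Finset.sum_congr rfl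
    intro k hk
    rw [Finset.mem_Icc] at hk
    have hkc : (k:ℝ) ≤ c := le_trans (by exact_mod_cast hk.2)
      (Nat.floor_le (le_trans zero_le_one hc))
    rw [ind_eval hδ k hk.1 hc, if_pos hkc]
  · intro k hk
    exact ind_int hδ k (Finset.mem_Icc.1 hk).1 (le_refl (1:ℝ)) hc

lemma moeb_antidiag (m : ℕ) :
    (∑ p ∈ m.divisorsAntidiagonal, ((moebius p.1 : ℤ) : ℂ)) = if m = 1 then 1 else 0 := by
  have key : (∑ p ∈ m.divisorsAntidiagonal, moebius p.1) = (if m = 1 then 1 else 0 : ℤ) := by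
    have h1 : (moebius * ArithmeticFunction.zeta : ArithmeticFunction ℤ) m = (1 : ArithmeticFunction ℤ) m := by
      rw [moebius_mul_coe_zeta]
    rw [mul_apply, one_apply] at h1
    rw [← h1]
    apply Finset.sum_congr rfl
    intro p hp
    have hp2 : p.2 ≠ 0 := Nat.right_ne_zero_of_mem_divisorsAntidiagonal hp
    rw [natCoe_apply, zeta_apply_ne hp2]
    push_cast
    ring
  have := congrArg (fun z : ℤ => (z : ℂ)) key
  simpa using this

lemma comb (N : ℕ) (hN : 1 ≤ N) (G : ℕ → ℂ) :
    ∑ n ∈ Finset.Icc 1 N, ((moebius n : ℤ) : ℂ) * ∑ k ∈ Finset.Icc 1 (N / n), G (n * k)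
      = G 1 := by
  have step1 : ∑ n ∈ Finset.Icc 1 N, ((moebius n : ℤ) : ℂ) * ∑ k ∈ Finset.Icc 1 (N / n), G (n * k)
      = ∑ p ∈ (Finset.Icc 1 N).sigma (fun n => Finset.Icc 1 (N / n)),
          ((moebius p.1 : ℤ) : ℂ) * G (p.1 * p.2) := by
    rw [Finset.sum_sigma]
    apply Finset.sum_congr rfl
    intro n _
    rw [Finset.mul_sum]
  have step2 : ∑ p ∈ (Finset.Icc 1 N).sigma (fun n => Finset.Icc 1 (N / n)),
          ((moebius p.1 : ℤ) : ℂ) * G (p.1 * p.2)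
      = ∑ q ∈ (Finset.Icc 1 N).sigma (fun m => m.divisorsAntidiagonal),
          ((moebius q.2.1 : ℤ) : ℂ) * G q.1 := by
    apply Finset.sum_nbij' (fun p => (⟨p.1 * p.2, (p.1, p.2)⟩ : Σ _ : ℕ, ℕ × ℕ))
      (fun q => (⟨q.2.1, q.2.2⟩ : Σ _ : ℕ, ℕ))
    · rintro ⟨n, k⟩ hp
      rw [Finset.mem_sigma, Finset.mem_Icc, Finset.mem_Icc] at hp
      obtain ⟨⟨hn1, hnN⟩, hk1, hkN⟩ := hp
      have hn0 : 0 < n := hn1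
      have hmul : n * k ≤ N := by
        rw [mul_comm]
        exact (Nat.le_div_iff_mul_le hn0).1 hkN
      rw [Finset.mem_sigma, Finset.mem_Icc]
      refine ⟨⟨Nat.one_le_iff_ne_zero.2 (Nat.mul_ne_zero (by omega) (by omega)), hmul⟩, ?_⟩
      rw [Nat.mem_divisorsAntidiagonal]
      exact ⟨rfl, by positivity⟩
    · rintro ⟨m, d, e⟩ hq
      rw [Finset.mem_sigma, Finset.mem_Icc] at hq
      obtain ⟨⟨hm1, hmN⟩, hde⟩ := hq
      rw [Nat.mem_divisorsAntidiagonal] at hde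
      obtain ⟨hprod, hm0⟩ := hde
      have hprod' : d * e = m := hprod
      have hm0' : m ≠ 0 := hm0
      have hmN' : m ≤ N := hmN
      have hm1' : (1:ℕ) ≤ m := hm1
      have hd0 : 0 < d := by
        rcases Nat.eq_zero_or_pos d with h | h
        · exfalso; apply hm0'; rw [← hprod', h, zero_mul]
        · exact h
      have he0 : 0 < e := by
        rcases Nat.eq_zero_or_pos e with h | h
        · exfalso; apply hm0'; rw [← hprod', h, mul_zero]
        · exact h
      rw [Finset.mem_sigma, Finset.mem_Icc, Finset.mem_Icc]
      refine ⟨⟨hd0, le_trans (Nat.le_of_dvd (by omega) ⟨e, hprod'.symm⟩) hmN'⟩, he0, ?_⟩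
      show e ≤ N / d
      refine Nat.le_div_iff_mul_le hd0 |>.2 ?_
      exact le_trans (le_of_eq (by rw [mul_comm, hprod'])) hmN'
    · rintro ⟨n, k⟩ _; rfl
    · rintro ⟨m, d, e⟩ hq
      rw [Finset.mem_sigma] at hq
      have := (Nat.mem_divisorsAntidiagonal.1 hq.2).1
      simp only [this]
    · rintro ⟨n, k⟩ _; rfl
  have step3 : ∑ q ∈ (Finset.Icc 1 N).sigma (fun m => m.divisorsAntidiagonal),
          ((moebius q.2.1 : ℤ) : ℂ) * G q.1
      = ∑ m ∈ Finset.Icc 1 N, (if m = 1 then (1:ℂ) else 0) * G m := by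
    rw [Finset.sum_sigma]
    apply Finset.sum_congr rfl
    intro m _
    dsimp only
    rw [← Finset.sum_mul, moeb_antidiag]
  rw [step1, step2, step3]
  have : ∀ m ∈ Finset.Icc 1 N, (if m = 1 then (1:ℂ) else 0) * G m
      = if m = 1 then G m else 0 := by
    intro m _
    split_ifs <;> simp
  rw [Finset.sum_congr rfl this, Finset.sum_ite_eq' (Finset.Icc 1 N) 1 G,
    if_pos (Finset.mem_Icc.2 ⟨le_refl 1, hN⟩)]

end Aux

theorem stmt_4 (δ : ℝ → ℂ) (hδ : LocallyIntegrableOn δ (Set.Ici 1))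
    (δ₁ : ℝ → ℂ) (hδ₁ : ∀ t : ℝ, δ₁ t = ∑ k ∈ Finset.Icc 1 ⌊t⌋₊, δ (t / k))
    (x : ℝ) (hx : 1 ≤ x) :
    ∫ t in (1:ℝ)..x, (Mf (x / t) : ℂ) * δ₁ t / t = ∫ u in (1:ℝ)..x, δ u / u := by
  have hx0 : (0:ℝ) < x := lt_of_lt_of_le one_pos hx
  have hN1 : 1 ≤ ⌊x⌋₊ := Nat.le_floor (by exact_mod_cast hx)
  -- pointwise representation of Mf (x / t)
  have hrep : ∀ t ∈ Set.Icc (1:ℝ) x, (Mf (x / t) : ℂ) * δ₁ t / t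
      = ∑ n ∈ Finset.Icc 1 ⌊x⌋₊,
          ((moebius n : ℤ) : ℂ) * (if t ≤ x / n then δ₁ t / t else 0) := by
    intro t ht
    have ht0 : (0:ℝ) < t := lt_of_lt_of_le one_pos ht.1
    have hiff : ∀ n : ℕ, 1 ≤ n → (n ≤ ⌊x / t⌋₊ ↔ t ≤ x / n) := by
      intro n hn
      have hn0 : (0:ℝ) < n := by exact_mod_cast hn
      rw [Nat.le_floor_iff (by positivity), le_div_iff₀ ht0, le_div_iff₀ hn0, mul_comm]
    have hMf : (Mf (x / t) : ℂ) = ∑ n ∈ Finset.Icc 1 ⌊x⌋₊,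
        (if t ≤ x / n then ((moebius n : ℤ) : ℂ) else 0) := by
      rw [Mf]
      push_cast
      have e1 : ∑ n ∈ Finset.Icc 1 ⌊x / t⌋₊, ((moebius n : ℤ) : ℂ)
          = ∑ n ∈ Finset.Icc 1 ⌊x / t⌋₊,
              (if t ≤ x / n then ((moebius n : ℤ) : ℂ) else 0) := by
        apply Finset.sum_congr rfl
        intro n hn
        rw [Finset.mem_Icc] at hn
        rw [if_pos ((hiff n hn.1).1 hn.2)]
      rw [e1]
      apply Finset.sum_subset
      · apply Finset.Icc_subset_Icc_right
        apply Nat.floor_le_floor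
        exact div_le_self (le_of_lt hx0) ht.1
      · intro n hn hn'
        rw [Finset.mem_Icc] at hn hn'
        have : ¬ t ≤ x / n := by
          intro h
          exact hn' ⟨hn.1, (hiff n hn.1).2 h⟩
        rw [if_neg this]
    rw [mul_div_assoc, hMf, Finset.sum_mul]
    apply Finset.sum_congr rfl
    intro n _
    split_ifs with h
    · ring
    · ring
  -- per-n integrability and evaluation
  have key : ∀ n ∈ Finset.Icc 1 ⌊x⌋₊,
      IntervalIntegrable (fun t => if t ≤ x / n then δ₁ t / t else 0) volume 1 x ∧
      (∫ t in (1:ℝ)..x, (if t ≤ x / n then δ₁ t / t else 0))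
        = ∫ t in (1:ℝ)..(x / n), δ₁ t / t := by
    intro n hn
    rw [Finset.mem_Icc] at hn
    have hn0 : (0:ℝ) < n := by exact_mod_cast hn.1
    have hnx : (n:ℝ) ≤ x := le_trans (by exact_mod_cast hn.2) (Nat.floor_le (le_of_lt hx0))
    have hxn1 : (1:ℝ) ≤ x / n := (one_le_div hn0).2 hnx
    have hxnx : x / n ≤ x := div_le_self (le_of_lt hx0) (by exact_mod_cast hn.1)
    have i1 : IntervalIntegrable (fun t => if t ≤ x / n then δ₁ t / t else 0)
        volume 1 (x / n) := by
      rw [intervalIntegrable_iff]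
      refine ((d1_int hδ hδ₁ hxn1).def'.congr_fun ?_ measurableSet_uIoc)
      intro t ht
      rw [Set.uIoc_of_le hxn1] at ht
      simp [ht.2]
    have i2 : IntervalIntegrable (fun t => if t ≤ x / n then δ₁ t / t else 0)
        volume (x / n) x := by
      rw [intervalIntegrable_iff, Set.uIoc_of_le hxnx]
      have h0 : IntegrableOn (fun _ : ℝ => (0:ℂ)) (Set.Ioc (x / n) x) volume :=
        integrableOn_zero
      refine h0.congr_fun ?_ measurableSet_Ioc
      intro t ht
      simp [not_le.2 ht.1]
    refine ⟨i1.trans i2, ?_⟩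
    rw [← intervalIntegral.integral_add_adjacent_intervals i1 i2]
    have e1 : (∫ t in (1:ℝ)..(x / n), (if t ≤ x / n then δ₁ t / t else 0))
        = ∫ t in (1:ℝ)..(x / n), δ₁ t / t := by
      apply intervalIntegral.integral_congr
      intro t ht
      rw [Set.uIcc_of_le hxn1] at ht
      simp [ht.2]
    have e2 : (∫ t in (x / n)..x, (if t ≤ x / n then δ₁ t / t else 0)) = 0 := by
      have : (∫ t in (x / n)..x, (if t ≤ x / n then δ₁ t / t else 0))
          = ∫ _ in (x / n)..x, (0:ℂ) := by
        apply intervalIntegral.integral_congr_ae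
        have hne : ∀ᵐ t : ℝ ∂volume, t ≠ x / n := by
          rw [ae_iff]
          have : {t : ℝ | ¬ t ≠ x / n} = {x / n} := by ext t; simp
          rw [this]
          exact Real.volume_singleton
        filter_upwards [hne] with t hta hmem
        rw [Set.uIoc_of_le hxnx] at hmem
        have : ¬ t ≤ x / n := by
          rcases lt_or_eq_of_le hmem.1.le with h | h
          · exact not_le.2 h
          · exact absurd h.symm hta
        simp [this]
      rw [this, intervalIntegral.integral_zero]
    rw [e1, e2, add_zero]
  -- main computation
  have step1 : (∫ t in (1:ℝ)..x, (Mf (x / t) : ℂ) * δ₁ t / t)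
      = ∑ n ∈ Finset.Icc 1 ⌊x⌋₊,
          ((moebius n : ℤ) : ℂ) * ∫ t in (1:ℝ)..x, (if t ≤ x / n then δ₁ t / t else 0) := by
    have e0 : (∫ t in (1:ℝ)..x, (Mf (x / t) : ℂ) * δ₁ t / t)
        = ∫ t in (1:ℝ)..x, ∑ n ∈ Finset.Icc 1 ⌊x⌋₊,
            ((moebius n : ℤ) : ℂ) * (if t ≤ x / n then δ₁ t / t else 0) := by
      apply intervalIntegral.integral_congr
      intro t ht
      rw [Set.uIcc_of_le hx] at ht
      exact hrep t ht
    rw [e0, intervalIntegral.integral_finset_sum]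
    · apply Finset.sum_congr rfl
      intro n hn
      rw [intervalIntegral.integral_const_mul]
    · intro n hn
      exact ((key n hn).1).const_mul _
  rw [step1]
  have step2 : ∑ n ∈ Finset.Icc 1 ⌊x⌋₊,
        ((moebius n : ℤ) : ℂ) * ∫ t in (1:ℝ)..x, (if t ≤ x / n then δ₁ t / t else 0)
      = ∑ n ∈ Finset.Icc 1 ⌊x⌋₊, ((moebius n : ℤ) : ℂ)
          * ∑ k ∈ Finset.Icc 1 (⌊x⌋₊ / n), ∫ u in (1:ℝ)..(x / ((n * k : ℕ) : ℝ)), δ u / u := by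
    apply Finset.sum_congr rfl
    intro n hn
    rw [(key n hn).2]
    have hn' := Finset.mem_Icc.1 hn
    have hn0 : (0:ℝ) < n := by exact_mod_cast hn'.1
    have hnx : (n:ℝ) ≤ x := le_trans (by exact_mod_cast hn'.2) (Nat.floor_le (le_of_lt hx0))
    have hxn1 : (1:ℝ) ≤ x / n := (one_le_div hn0).2 hnx
    rw [d1_eval hδ hδ₁ hxn1, Nat.floor_div_natCast]
    congr 1
    apply Finset.sum_congr rfl
    intro k hk
    congr 1
    push_cast
    rw [div_div]
  rw [step2, comb ⌊x⌋₊ hN1 (fun m => ∫ u in (1:ℝ)..(x / (m:ℝ)), δ u / u)]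
  norm_num
end

section
/- Let δ : [1,∞) → ℂ be locally integrable. Then for every real x ≥ 1, ∫₁ˣ m(x/t) (Σ_{k≤t} δ(t/k)) (dt/t²) = ∫₁ˣ δ(u) (du/u²), where m(u) = Σ_{n≤u} μ(n)/n. -/
open Finset MeasureTheory ArithmeticFunction Real

lemma sum_Icc_floor_eq {M₀ : Type*} [AddCommMonoid M₀] (f : ℕ → M₀) (y : ℝ) (M : ℕ)
    (h0 : 0 ≤ y) (hM : ⌊y⌋₊ ≤ M) :
    ∑ n ∈ Finset.Icc 1 ⌊y⌋₊, f n = ∑ n ∈ Finset.Icc 1 M, if (n : ℝ) ≤ y then f n else 0 := by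
  rw [← Finset.sum_filter]
  apply Finset.sum_congr _ (fun _ _ => rfl)
  ext a
  simp only [Finset.mem_Icc, Finset.mem_filter]
  constructor
  · rintro ⟨h1, h2⟩
    exact ⟨⟨h1, le_trans h2 hM⟩, le_trans (Nat.cast_le.mpr h2) (Nat.floor_le h0)⟩
  · rintro ⟨⟨h1, _⟩, h3⟩
    exact ⟨h1, Nat.le_floor h3⟩

lemma key_integral (δ : ℝ → ℂ) (x : ℝ) (hx : 1 ≤ x)
    (hδx : IntegrableOn δ (Set.Icc 1 x) volume)
    (n k : ℕ) (hn : 1 ≤ n) (hk : 1 ≤ k) :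
    IntervalIntegrable
        (fun t => if (k : ℝ) ≤ t ∧ t ≤ x / n then δ (t / k) / (t : ℂ) ^ 2 else 0) volume 1 x ∧
    (∫ t in (1:ℝ)..x, if (k : ℝ) ≤ t ∧ t ≤ x / n then δ (t / k) / (t : ℂ) ^ 2 else 0)
      = if (n : ℝ) * k ≤ x then
          (k : ℂ)⁻¹ * ∫ u in (1:ℝ)..(x / ((n : ℝ) * k)), δ u / (u : ℂ) ^ 2 else 0 := by
  have hx0 : (0:ℝ) < x := by linarith
  have hk1 : (1:ℝ) ≤ k := by exact_mod_cast hk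
  have hn1 : (1:ℝ) ≤ n := by exact_mod_cast hn
  have hk0 : (0:ℝ) < k := by linarith
  have hn0 : (0:ℝ) < n := by linarith
  have hxn : x / n ≤ x := div_le_self hx0.le hn1
  set core : ℝ → ℂ := fun t => δ (t / k) / (t : ℂ) ^ 2 with hcore
  have hind : (fun t => if (k : ℝ) ≤ t ∧ t ≤ x / n then δ (t / k) / (t : ℂ) ^ 2 else 0)
      = (Set.Icc (k : ℝ) (x / n)).indicator core := by
    funext t
    simp [Set.indicator_apply, Set.mem_Icc, hcore]
  have hcoreInt : IntegrableOn core (Set.Icc (k : ℝ) (x / n)) volume := by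
    by_cases hkn : (k : ℝ) ≤ x / n
    · have h1 : IntervalIntegrable δ volume 1 x := by
        apply IntegrableOn.intervalIntegrable
        rwa [Set.uIcc_of_le hx]
      have h2 := h1.comp_mul_right (c := (k : ℝ)⁻¹)
      have h3 : IntervalIntegrable (fun t => δ (t / k)) volume k (x * k) := by
        simpa [div_eq_mul_inv, one_div, inv_inv] using h2
      have hxxk : x ≤ x * k := le_mul_of_one_le_right hx0.le hk1
      have h4 : IntervalIntegrable (fun t => δ (t / k)) volume k (x / n) := by
        apply h3.mono_set
        rw [Set.uIcc_of_le hkn, Set.uIcc_of_le (le_trans (le_trans hkn hxn) hxxk)]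
        exact Set.Icc_subset_Icc le_rfl (le_trans hxn hxxk)
      have hcont : ContinuousOn (fun t : ℝ => ((t : ℂ) ^ 2)⁻¹) (Set.uIcc (k : ℝ) (x / n)) := by
        apply ContinuousOn.inv₀
        · exact (Complex.continuous_ofReal.pow 2).continuousOn
        · intro t ht
          rw [Set.uIcc_of_le hkn] at ht
          have h1t : (1:ℝ) ≤ t := le_trans hk1 ht.1
          exact pow_ne_zero _ (Complex.ofReal_ne_zero.mpr (by linarith))
      have h5 : IntervalIntegrable core volume k (x / n) := by
        have := h4.mul_continuousOn hcont
        simpa [hcore, div_eq_mul_inv] using this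
      exact (intervalIntegrable_iff_integrableOn_Icc_of_le hkn).mp h5
    · rw [Set.Icc_eq_empty hkn]
      exact integrableOn_empty
  have hInd : Integrable ((Set.Icc (k : ℝ) (x / n)).indicator core) volume :=
    (integrable_indicator_iff measurableSet_Icc).mpr hcoreInt
  constructor
  · rw [hind]
    exact hInd.intervalIntegrable
  · rw [hind, intervalIntegral.integral_of_le hx,
      MeasureTheory.setIntegral_indicator measurableSet_Icc]
    by_cases hkn : (k : ℝ) ≤ x / n
    · have hcond : (n : ℝ) * k ≤ x := by
        rw [le_div_iff₀ hn0] at hkn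
        linarith [hkn, mul_comm (k:ℝ) (n:ℝ)]
      rw [if_pos hcond]
      have hset : (Set.Ioc (1:ℝ) x ∩ Set.Icc (k : ℝ) (x / n) : Set ℝ) =ᵐ[volume]
          (Set.Ioc (k : ℝ) (x / n) : Set ℝ) := by
        have h1 : (Set.Ioc (1:ℝ) x ∩ Set.Icc (k : ℝ) (x / n) : Set ℝ) =ᵐ[volume]
            (Set.Ioc (1:ℝ) x ∩ Set.Ioc (k : ℝ) (x / n) : Set ℝ) :=
          MeasureTheory.ae_eq_set_inter (Filter.EventuallyEq.refl _ _) Ioc_ae_eq_Icc.symm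
        rwa [Set.Ioc_inter_Ioc, max_eq_right hk1, min_eq_right hxn] at h1
      rw [setIntegral_congr_set hset, ← intervalIntegral.integral_of_le hkn]
      have e2 : ∀ u : ℝ, δ u / ((((k : ℝ) * u : ℝ)) : ℂ) ^ 2
          = ((k : ℂ) ^ 2)⁻¹ * (δ u / (u : ℂ) ^ 2) := by
        intro u
        push_cast
        ring
      have e1 : ∀ t : ℝ, core t = (fun u : ℝ => δ u / ((((k : ℝ) * u : ℝ)) : ℂ) ^ 2) (t / k) := by
        intro t
        simp only [hcore]
        rw [mul_div_cancel₀ _ (ne_of_gt hk0)]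
      calc ∫ t in (k : ℝ)..(x / n), core t
          = ∫ t in (k : ℝ)..(x / n), (fun u : ℝ => δ u / ((((k : ℝ) * u : ℝ)) : ℂ) ^ 2) (t / k) := by
            simp only [← e1]
        _ = (k : ℝ) • ∫ u in ((k : ℝ) / k)..((x / n) / k), δ u / ((((k : ℝ) * u : ℝ)) : ℂ) ^ 2 :=
            intervalIntegral.integral_comp_div
              (fun u : ℝ => δ u / ((((k : ℝ) * u : ℝ)) : ℂ) ^ 2) (ne_of_gt hk0)
        _ = (k : ℂ)⁻¹ * ∫ u in (1:ℝ)..(x / ((n : ℝ) * k)), δ u / (u : ℂ) ^ 2 := by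
            rw [div_self (ne_of_gt hk0), div_div]
            simp only [e2]
            rw [intervalIntegral.integral_const_mul, Complex.real_smul]
            have hkC : (k : ℂ) ≠ 0 := by exact_mod_cast ne_of_gt hk0
            push_cast
            rw [← mul_assoc]
            congr 1
            field_simp
    · have hcond : ¬ ((n : ℝ) * k ≤ x) := by
        intro h
        apply hkn
        rw [le_div_iff₀ hn0]
        linarith [mul_comm (k:ℝ) (n:ℝ)]
      rw [if_neg hcond, Set.Icc_eq_empty hkn, Set.inter_empty, Measure.restrict_empty,
        integral_zero_measure]

lemma final_sum (F : ℝ → ℂ) (x : ℝ) (N : ℕ) (hN1 : 1 ≤ N)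
    (hcond : ∀ n k : ℕ, ((n : ℝ) * k ≤ x ↔ n * k ≤ N)) :
    ∑ n ∈ Finset.Icc 1 N, ∑ k ∈ Finset.Icc 1 N,
      ((moebius n : ℤ) : ℂ) / n *
        (if (n : ℝ) * k ≤ x then (k : ℂ)⁻¹ * F (x / ((n : ℝ) * k)) else 0) = F x := by
  classical
  have step1 : ∀ n ∈ Finset.Icc 1 N, ∀ k ∈ Finset.Icc 1 N,
      ((moebius n : ℤ) : ℂ) / n *
          (if (n : ℝ) * k ≤ x then (k : ℂ)⁻¹ * F (x / ((n : ℝ) * k)) else 0)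
        = if n * k ≤ N then
            ((moebius n : ℤ) : ℂ) * (F (x / ((n * k : ℕ) : ℝ)) / ((n * k : ℕ) : ℂ)) else 0 := by
    intro n hn k hk
    have hn1 : 1 ≤ n := (Finset.mem_Icc.mp hn).1
    have hk1 : 1 ≤ k := (Finset.mem_Icc.mp hk).1
    have hnC : (n : ℂ) ≠ 0 := Nat.cast_ne_zero.mpr (by omega)
    have hkC : (k : ℂ) ≠ 0 := Nat.cast_ne_zero.mpr (by omega)
    simp only [hcond n k]
    split_ifs with h
    · push_cast
      field_simp
    · simp
  rw [Finset.sum_congr rfl (fun n hn => Finset.sum_congr rfl (step1 n hn))]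
  rw [← Finset.sum_product']
  rw [← Finset.sum_filter]
  have hP : ((Finset.Icc 1 N ×ˢ Finset.Icc 1 N).filter (fun p => p.1 * p.2 ≤ N))
      = (Finset.Icc 1 N).biUnion (fun m => m.divisorsAntidiagonal) := by
    ext p
    simp only [Finset.mem_filter, Finset.mem_product, Finset.mem_Icc, Finset.mem_biUnion,
      Nat.mem_divisorsAntidiagonal]
    constructor
    · rintro ⟨⟨⟨h1, h2⟩, h3, h4⟩, h5⟩
      exact ⟨p.1 * p.2, ⟨Nat.one_le_iff_ne_zero.mpr (Nat.mul_ne_zero (by omega) (by omega)), h5⟩,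
        rfl, Nat.mul_ne_zero (by omega) (by omega)⟩
    · rintro ⟨m, ⟨hm1, hmN⟩, hprod, hm0⟩
      have hp1 : 0 < p.1 := Nat.pos_of_ne_zero (by rintro h; rw [h, zero_mul] at hprod; omega)
      have hp2 : 0 < p.2 := Nat.pos_of_ne_zero (by rintro h; rw [h, mul_zero] at hprod; omega)
      have hle1 : p.1 ≤ m := hprod ▸ Nat.le_mul_of_pos_right _ hp2
      have hle2 : p.2 ≤ m := hprod ▸ Nat.le_mul_of_pos_left _ hp1
      exact ⟨⟨⟨hp1, le_trans hle1 hmN⟩, hp2, le_trans hle2 hmN⟩, hprod ▸ hmN⟩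
  rw [hP, Finset.sum_biUnion]
  · have inner : ∀ m ∈ Finset.Icc 1 N,
        (∑ p ∈ m.divisorsAntidiagonal,
            ((moebius p.1 : ℤ) : ℂ) * (F (x / ((p.1 * p.2 : ℕ) : ℝ)) / ((p.1 * p.2 : ℕ) : ℂ)))
          = if m = 1 then F (x / (m : ℝ)) / (m : ℂ) else 0 := by
      intro m hm
      have e : (∑ p ∈ m.divisorsAntidiagonal,
            ((moebius p.1 : ℤ) : ℂ) * (F (x / ((p.1 * p.2 : ℕ) : ℝ)) / ((p.1 * p.2 : ℕ) : ℂ)))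
          = (∑ p ∈ m.divisorsAntidiagonal, ((moebius p.1 : ℤ) : ℂ))
              * (F (x / (m : ℝ)) / (m : ℂ)) := by
        rw [Finset.sum_mul]
        apply Finset.sum_congr rfl
        intro p hp
        rw [(Nat.mem_divisorsAntidiagonal.mp hp).1]
      rw [e]
      have e3 : (∑ p ∈ m.divisorsAntidiagonal, moebius p.1)
          = ∑ d ∈ m.divisors, moebius d := by
        rw [← Nat.sum_divisorsAntidiagonal (fun a b => moebius a)]
      have e4 : (∑ d ∈ m.divisors, moebius d) = if m = 1 then 1 else 0 := by
        have h := (coe_mul_zeta_apply (f := (moebius : ArithmeticFunction ℤ)) (x := m)).symm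
        rwa [moebius_mul_coe_zeta, one_apply] at h
      have e5 : (∑ p ∈ m.divisorsAntidiagonal, ((moebius p.1 : ℤ) : ℂ))
          = ((if m = 1 then 1 else 0 : ℤ) : ℂ) := by
        rw [← e4, ← e3]
        push_cast
        rfl
      rw [e5]
      split_ifs with h
      · simp
      · simp
    rw [Finset.sum_congr rfl inner, Finset.sum_ite_eq' (Finset.Icc 1 N) 1
      (fun m => F (x / (m : ℝ)) / (m : ℂ)), if_pos (Finset.mem_Icc.mpr ⟨le_rfl, hN1⟩)]
    simp
  · intro m₁ h₁ m₂ h₂ hne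
    apply Finset.disjoint_left.mpr
    intro p hp1 hp2
    exact hne (((Nat.mem_divisorsAntidiagonal.mp hp1).1.symm).trans
      (Nat.mem_divisorsAntidiagonal.mp hp2).1)

set_option maxHeartbeats 2000000 in
theorem stmt_5 (δ : ℝ → ℂ) (hδ : LocallyIntegrableOn δ (Set.Ici 1))
    (x : ℝ) (hx : 1 ≤ x) :
    ∫ t in (1:ℝ)..x, (mf (x / t) : ℂ) * (∑ k ∈ Finset.Icc 1 ⌊t⌋₊, δ (t / k)) / t ^ 2
      = ∫ u in (1:ℝ)..x, δ u / u ^ 2 := by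
  classical
  have hx0 : (0:ℝ) < x := by linarith
  set N := ⌊x⌋₊ with hNdef
  have hN1 : 1 ≤ N := Nat.le_floor (by exact_mod_cast hx)
  have hNx : (N : ℝ) ≤ x := Nat.floor_le hx0.le
  have hδx : IntegrableOn δ (Set.Icc 1 x) volume :=
    hδ.integrableOn_compact_subset Set.Icc_subset_Ici_self isCompact_Icc
  have hA : ∀ t ∈ Set.uIcc (1:ℝ) x,
      (mf (x / t) : ℂ) * (∑ k ∈ Finset.Icc 1 ⌊t⌋₊, δ (t / k)) / t ^ 2
        = ∑ n ∈ Finset.Icc 1 N, ∑ k ∈ Finset.Icc 1 N,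
            ((moebius n : ℤ) : ℂ) / n *
              (if (k : ℝ) ≤ t ∧ t ≤ x / n then δ (t / k) / (t : ℂ) ^ 2 else 0) := by
    intro t ht
    rw [Set.uIcc_of_le hx] at ht
    obtain ⟨ht1, htx⟩ := ht
    have ht0 : (0:ℝ) < t := by linarith
    have hfloor1 : ⌊x / t⌋₊ ≤ N := Nat.floor_le_floor (div_le_self hx0.le ht1)
    have hfloor2 : ⌊t⌋₊ ≤ N := Nat.floor_le_floor htx
    have e1 : ((mf (x / t) : ℝ) : ℂ)
        = ∑ n ∈ Finset.Icc 1 N, if (n : ℝ) ≤ x / t then ((moebius n : ℤ) : ℂ) / n else 0 := by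
      simp only [mf]
      push_cast
      rw [sum_Icc_floor_eq (fun n => ((moebius n : ℤ) : ℂ) / n) (x / t) N (by positivity) hfloor1]
    have e2 : (∑ k ∈ Finset.Icc 1 ⌊t⌋₊, δ (t / k))
        = ∑ k ∈ Finset.Icc 1 N, if (k : ℝ) ≤ t then δ (t / k) else 0 :=
      sum_Icc_floor_eq (fun k => δ (t / k)) t N ht0.le hfloor2
    rw [e1, e2, Finset.sum_mul_sum, Finset.sum_div]
    apply Finset.sum_congr rfl
    intro n hn
    rw [Finset.sum_div]
    apply Finset.sum_congr rfl
    intro k hk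
    have hn1 : 1 ≤ n := (Finset.mem_Icc.mp hn).1
    have hn0 : (0:ℝ) < n := by exact_mod_cast hn1
    have hiff : ((n : ℝ) ≤ x / t) ↔ (t ≤ x / n) := by
      rw [le_div_iff₀ ht0, le_div_iff₀ hn0, mul_comm]
    by_cases h1 : (n : ℝ) ≤ x / t <;> by_cases h2 : (k : ℝ) ≤ t
    · rw [if_pos h1, if_pos h2, if_pos ⟨h2, hiff.mp h1⟩]
      ring
    · rw [if_pos h1, if_neg h2, if_neg (fun hc => h2 hc.1)]
      simp
    · rw [if_neg h1, if_pos h2, if_neg (fun hc => h1 (hiff.mpr hc.2))]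
      simp
    · rw [if_neg h1, if_neg h2, if_neg (fun hc => h2 hc.1)]
      simp
  rw [intervalIntegral.integral_congr hA]
  have hKey : ∀ n ∈ Finset.Icc 1 N, ∀ k ∈ Finset.Icc 1 N,
      IntervalIntegrable
        (fun t => if (k : ℝ) ≤ t ∧ t ≤ x / n then δ (t / k) / (t : ℂ) ^ 2 else 0) volume 1 x ∧
      (∫ t in (1:ℝ)..x, if (k : ℝ) ≤ t ∧ t ≤ x / n then δ (t / k) / (t : ℂ) ^ 2 else 0)
        = if (n : ℝ) * k ≤ x then
            (k : ℂ)⁻¹ * ∫ u in (1:ℝ)..(x / ((n : ℝ) * k)), δ u / (u : ℂ) ^ 2 else 0 :=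
    fun n hn k hk =>
      key_integral δ x hx hδx n k (Finset.mem_Icc.mp hn).1 (Finset.mem_Icc.mp hk).1
  have hsum : ∀ n ∈ Finset.Icc 1 N, IntervalIntegrable
      (fun t => ∑ k ∈ Finset.Icc 1 N, ((moebius n : ℤ) : ℂ) / n *
        (if (k : ℝ) ≤ t ∧ t ≤ x / n then δ (t / k) / (t : ℂ) ^ 2 else 0)) volume 1 x := by
    intro n hn
    rw [intervalIntegrable_iff]
    refine MeasureTheory.integrable_finset_sum _ (fun k hk => ?_)
    have h := (hKey n hn k hk).1.const_mul (((moebius n : ℤ) : ℂ) / n)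
    rwa [intervalIntegrable_iff] at h
  have hswap : (∫ t in (1:ℝ)..x, ∑ n ∈ Finset.Icc 1 N, ∑ k ∈ Finset.Icc 1 N,
        ((moebius n : ℤ) : ℂ) / n *
          (if (k : ℝ) ≤ t ∧ t ≤ x / n then δ (t / k) / (t : ℂ) ^ 2 else 0))
      = ∑ n ∈ Finset.Icc 1 N, ∫ t in (1:ℝ)..x, ∑ k ∈ Finset.Icc 1 N,
          ((moebius n : ℤ) : ℂ) / n *
            (if (k : ℝ) ≤ t ∧ t ≤ x / n then δ (t / k) / (t : ℂ) ^ 2 else 0) :=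
    intervalIntegral.integral_finset_sum hsum
  refine hswap.trans ?_
  have step : ∀ n ∈ Finset.Icc 1 N,
      (∫ t in (1:ℝ)..x, ∑ k ∈ Finset.Icc 1 N,
          ((moebius n : ℤ) : ℂ) / n *
            (if (k : ℝ) ≤ t ∧ t ≤ x / n then δ (t / k) / (t : ℂ) ^ 2 else 0))
        = ∑ k ∈ Finset.Icc 1 N, ((moebius n : ℤ) : ℂ) / n *
            (if (n : ℝ) * k ≤ x then
              (k : ℂ)⁻¹ * ∫ u in (1:ℝ)..(x / ((n : ℝ) * k)), δ u / (u : ℂ) ^ 2 else 0) := by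
    intro n hn
    have h1 : (∫ t in (1:ℝ)..x, ∑ k ∈ Finset.Icc 1 N,
          ((moebius n : ℤ) : ℂ) / n *
            (if (k : ℝ) ≤ t ∧ t ≤ x / n then δ (t / k) / (t : ℂ) ^ 2 else 0))
        = ∑ k ∈ Finset.Icc 1 N, ∫ t in (1:ℝ)..x,
            ((moebius n : ℤ) : ℂ) / n *
              (if (k : ℝ) ≤ t ∧ t ≤ x / n then δ (t / k) / (t : ℂ) ^ 2 else 0) :=
      intervalIntegral.integral_finset_sum (fun k hk => ((hKey n hn k hk).1.const_mul _))
    rw [h1]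
    apply Finset.sum_congr rfl
    intro k hk
    rw [intervalIntegral.integral_const_mul, (hKey n hn k hk).2]
  rw [Finset.sum_congr rfl step]
  apply final_sum (fun y => ∫ u in (1:ℝ)..y, δ u / (u : ℂ) ^ 2) x N hN1
  intro n k
  rw [← Nat.cast_mul]
  exact (Nat.le_floor_iff hx0.le).symm
end

section
/- Let g : [0,1] → ℂ be integrable with ∫₀¹ g(y) dy = 1, and define G(t) = 1 − (1/t) Σ_{n≤t} g(n/t). Then for every real x ≥ 1, m(x) − M(x)/x = ∫₁ˣ (M(x/t)·t/x) G(t) (dt/t) + (1/x) ∫_{1/x}^1 (g(y)/y) dy. -/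
open Finset MeasureTheory ArithmeticFunction Real Set

lemma image_inv_div (n b : ℝ) (hn : 0 < n) (hb : n ≤ b) :
    (fun u : ℝ => n / u) '' Set.Ioo (n / b) 1 = Set.Ioo n b := by
  have hb0 : 0 < b := hn.trans_le hb
  ext t
  simp only [Set.mem_image, Set.mem_Ioo]
  constructor
  · rintro ⟨u, ⟨h1, h2⟩, rfl⟩
    have hu0 : 0 < u := lt_trans (by positivity) h1
    have h1' : n < u * b := by
      have := (div_lt_iff₀ hb0).mp h1; linarith [mul_comm u b]
    constructor
    · rw [lt_div_iff₀ hu0]; nlinarith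
    · rw [div_lt_iff₀ hu0]; nlinarith
  · rintro ⟨h1, h2⟩
    have ht0 : 0 < t := hn.trans h1
    refine ⟨n / t, ⟨?_, ?_⟩, by field_simp⟩
    · exact div_lt_div_of_pos_left hn ht0 h2
    · rw [div_lt_one ht0]; exact h1

lemma cov_aux (n b : ℝ) (hn : 0 < n) (hb : n ≤ b) :
    (∀ u ∈ Set.Ioo (n/b) 1, HasDerivWithinAt (fun u : ℝ => n / u) (-(n / u ^ 2)) (Set.Ioo (n/b) 1) u)
    ∧ Set.InjOn (fun u : ℝ => n / u) (Set.Ioo (n/b) 1) := by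
  have hb0 : 0 < b := hn.trans_le hb
  constructor
  · intro u hu
    have hu0 : 0 < u := lt_trans (by positivity) hu.1
    have h := ((hasDerivAt_inv hu0.ne').const_mul n).hasDerivWithinAt (s := Set.Ioo (n/b) 1)
    have e1 : (fun u:ℝ => n / u) = fun u => n * u⁻¹ := by
      funext v; rw [div_eq_mul_inv]
    have e2 : -(n / u^2) = n * -(u^2)⁻¹ := by rw [div_eq_mul_inv]; ring
    rw [e1, e2]; exact h
  · intro u hu v hv h
    have hu0 : 0 < u := lt_trans (by positivity) hu.1
    have hv0 : 0 < v := lt_trans (by positivity) hv.1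
    simp only at h
    field_simp at h
    exact h.symm

lemma smul_form (g : ℝ → ℂ) (n : ℝ) (hn : 0 < n) (u : ℝ) (hu0 : 0 < u) :
    |(-(n / u ^ 2))| • (g (n / (n / u)) / ((n / u : ℝ) : ℂ)) = g u / u := by
  have h2 : n / (n / u) = u := by field_simp
  rw [h2, abs_of_nonpos (neg_nonpos.mpr (by positivity)), neg_neg, Complex.real_smul]
  have hu : (u:ℂ) ≠ 0 := by exact_mod_cast hu0.ne'
  have hnc : (n:ℂ) ≠ 0 := by exact_mod_cast hn.ne'
  push_cast
  field_simp

lemma cov_integral (g : ℝ → ℂ) (n b : ℝ) (hn : 0 < n) (hb : n ≤ b) :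
    (∫ t in Set.Ioo n b, g (n / t) / t) = ∫ u in Set.Ioo (n/b) 1, g u / u := by
  have hb0 : 0 < b := hn.trans_le hb
  obtain ⟨hderiv, hinj⟩ := cov_aux n b hn hb
  rw [← image_inv_div n b hn hb,
    integral_image_eq_integral_abs_deriv_smul measurableSet_Ioo hderiv hinj]
  refine setIntegral_congr_fun measurableSet_Ioo (fun u hu => ?_)
  exact smul_form g n hn u (lt_trans (by positivity) hu.1)

lemma cov_integrable (g : ℝ → ℂ) (n b : ℝ) (hn : 0 < n) (hb : n ≤ b)
    (h : IntegrableOn (fun u => g u / u) (Set.Ioo (n/b) 1)) :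
    IntegrableOn (fun t => g (n / t) / t) (Set.Ioo n b) := by
  have hb0 : 0 < b := hn.trans_le hb
  obtain ⟨hderiv, hinj⟩ := cov_aux n b hn hb
  rw [← image_inv_div n b hn hb,
    integrableOn_image_iff_integrableOn_abs_deriv_smul measurableSet_Ioo hderiv hinj]
  apply h.congr_fun _ measurableSet_Ioo
  intro u hu
  exact (smul_form g n hn u (lt_trans (by positivity) hu.1)).symm

lemma integrable_g_div (g : ℝ → ℂ) (hg : IntegrableOn g (Set.Icc 0 1)) (ε : ℝ) (hε : 0 < ε) :
    IntegrableOn (fun u => g u / u) (Set.Ioo ε 1) := by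
  have h1 : IntegrableOn g (Set.Ioo ε 1) :=
    hg.mono_set (fun u hu => ⟨le_of_lt (hε.trans hu.1), hu.2.le⟩)
  have hmeas : AEStronglyMeasurable (fun u : ℝ => ((u:ℂ))⁻¹)
      (volume.restrict (Set.Ioo ε 1)) :=
    (Complex.measurable_ofReal.inv).aestronglyMeasurable
  have hbd : ∀ᵐ (u : ℝ) ∂(volume.restrict (Set.Ioo ε 1)), ‖((u:ℂ))⁻¹‖ ≤ ε⁻¹ := by
    filter_upwards [ae_restrict_mem measurableSet_Ioo] with u hu
    have hu0 : 0 < u := hε.trans hu.1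
    rw [norm_inv, Complex.norm_real, Real.norm_of_nonneg hu0.le]
    exact inv_anti₀ hε hu.1.le
  have := h1.bdd_mul hmeas hbd
  apply this.congr
  filter_upwards with u
  rw [div_eq_inv_mul]

lemma pair_sum (N : ℕ) (hN : 1 ≤ N) (c : ℕ → ℂ) :
    ∑ m ∈ Finset.Icc 1 N, ∑ n ∈ Finset.Icc 1 N,
      (if m * n ≤ N then (moebius m : ℂ) * c (m * n) else 0) = c 1 := by
  have step1 : ∑ m ∈ Finset.Icc 1 N, ∑ n ∈ Finset.Icc 1 N,
      (if m * n ≤ N then (moebius m : ℂ) * c (m * n) else 0)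
      = ∑ p ∈ (Finset.Icc 1 N ×ˢ Finset.Icc 1 N).filter (fun p => p.1 * p.2 ≤ N),
          (moebius p.1 : ℂ) * c (p.1 * p.2) := by
    rw [Finset.sum_filter, Finset.sum_product]
  have step2 : ∑ p ∈ (Finset.Icc 1 N ×ˢ Finset.Icc 1 N).filter (fun p => p.1 * p.2 ≤ N),
      (moebius p.1 : ℂ) * c (p.1 * p.2)
      = ∑ q ∈ (Finset.Icc 1 N).sigma (fun k => k.divisorsAntidiagonal),
          (moebius q.2.1 : ℂ) * c (q.2.1 * q.2.2) := by
    refine Finset.sum_nbij' (fun p => ⟨p.1 * p.2, p⟩) (fun q => q.2) ?_ ?_ ?_ ?_ ?_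
    · intro p hp
      simp only [Finset.mem_filter, Finset.mem_product, Finset.mem_Icc] at hp
      simp only [Finset.mem_sigma, Finset.mem_Icc, Nat.mem_divisorsAntidiagonal]
      obtain ⟨⟨⟨hm1, hmN⟩, ⟨hn1, hnN⟩⟩, hle⟩ := hp
      exact ⟨⟨Nat.mul_pos hm1 hn1, hle⟩, trivial, (Nat.mul_pos hm1 hn1).ne'⟩
    · intro q hq
      simp only [Finset.mem_sigma, Finset.mem_Icc, Nat.mem_divisorsAntidiagonal] at hq
      obtain ⟨⟨hk1, hkN⟩, hmul, hk0⟩ := hq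
      simp only [Finset.mem_filter, Finset.mem_product, Finset.mem_Icc]
      have h1 : q.2.1 ∣ q.1 := ⟨q.2.2, hmul.symm⟩
      have h2 : q.2.2 ∣ q.1 := ⟨q.2.1, by rw [← hmul]; ring⟩
      have k0 : 0 < q.1 := by omega
      have hm0 : 0 < q.2.1 := Nat.pos_of_ne_zero (fun h => by simp [h] at hmul; omega)
      have hn0 : 0 < q.2.2 := Nat.pos_of_ne_zero (fun h => by simp [h] at hmul; omega)
      exact ⟨⟨⟨hm0, (Nat.le_of_dvd k0 h1).trans hkN⟩, ⟨hn0, (Nat.le_of_dvd k0 h2).trans hkN⟩⟩,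
        by rw [hmul]; exact hkN⟩
    · intro p hp; rfl
    · intro q hq
      simp only [Finset.mem_sigma, Nat.mem_divisorsAntidiagonal] at hq
      exact Sigma.ext hq.2.1 (by simp)
    · intro p hp; rfl
  have step3 : ∑ q ∈ (Finset.Icc 1 N).sigma (fun k => k.divisorsAntidiagonal),
      (moebius q.2.1 : ℂ) * c (q.2.1 * q.2.2)
      = ∑ k ∈ Finset.Icc 1 N, ∑ p ∈ k.divisorsAntidiagonal, (moebius p.1 : ℂ) * c k := by
    rw [Finset.sum_sigma]
    refine Finset.sum_congr rfl (fun k hk => Finset.sum_congr rfl (fun p hp => ?_))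
    rw [(Nat.mem_divisorsAntidiagonal.mp hp).1]
  have step4 : ∀ k ∈ Finset.Icc 1 N,
      ∑ p ∈ k.divisorsAntidiagonal, (moebius p.1 : ℂ) * c k
      = if k = 1 then c k else 0 := by
    intro k hk
    rw [← Finset.sum_mul]
    have h1 : ∑ p ∈ k.divisorsAntidiagonal, (moebius p.1 : ℂ)
        = ∑ d ∈ k.divisors, (moebius d : ℂ) := by
      rw [← Nat.sum_divisorsAntidiagonal (fun d e => (moebius d : ℂ))]
    have h2 : ∑ d ∈ k.divisors, moebius d = if k = 1 then 1 else 0 := by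
      have := congrArg (fun f => f k) moebius_mul_coe_zeta
      simp only [ArithmeticFunction.coe_mul_zeta_apply, ArithmeticFunction.one_apply] at this
      exact this
    rw [h1]
    have h3 : ∑ d ∈ k.divisors, (moebius d : ℂ) = ((if k = 1 then 1 else 0 : ℤ) : ℂ) := by
      rw [← h2]; push_cast; rfl
    rw [h3]
    split_ifs <;> simp
  rw [step1, step2, step3, Finset.sum_congr rfl step4, Finset.sum_ite_eq' (Finset.Icc 1 N) 1 c]
  simp [hN]

lemma ae_ne_real (n : ℝ) : ∀ᵐ t : ℝ, t ≠ n := by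
  have h : volume ({n} : Set ℝ) = 0 := measure_singleton n
  filter_upwards [measure_eq_zero_iff_ae_notMem.mp h] with t ht
  simpa using ht

lemma interval_indicator_Icc (F : ℝ → ℂ) (x n b : ℝ) (hx : 1 ≤ x) (h1n : 1 ≤ n) (hbx : b ≤ x) :
    (∫ t in (1:ℝ)..x, Set.indicator (Set.Icc n b) F t) = ∫ t in Set.Ioo n b, F t := by
  rw [intervalIntegral.integral_of_le hx,
    ← MeasureTheory.integral_indicator measurableSet_Ioc,
    ← MeasureTheory.integral_indicator measurableSet_Ioo]
  apply integral_congr_ae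
  filter_upwards [ae_ne_real n, ae_ne_real b] with t ht1 ht2
  by_cases h : t ∈ Set.Ioo n b
  · have h' : t ∈ Set.Ioc 1 x := ⟨lt_of_le_of_lt h1n h.1, (le_of_lt h.2).trans hbx⟩
    have h'' : t ∈ Set.Icc n b := ⟨h.1.le, h.2.le⟩
    rw [Set.indicator_of_mem h', Set.indicator_of_mem h'', Set.indicator_of_mem h]
  · rw [Set.indicator_of_notMem h]
    by_cases h2 : t ∈ Set.Ioc 1 x
    · rw [Set.indicator_of_mem h2]
      apply Set.indicator_of_notMem
      intro hmem
      exact h ⟨lt_of_le_of_ne hmem.1 (Ne.symm ht1), lt_of_le_of_ne hmem.2 ht2⟩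
    · rw [Set.indicator_of_notMem h2]

lemma indicator_Icc_intable (F : ℝ → ℂ) (n b : ℝ) (x : ℝ)
    (hF : IntegrableOn F (Set.Ioo n b)) :
    IntervalIntegrable (Set.indicator (Set.Icc n b) F) volume 1 x := by
  rcases le_or_gt n b with h | h
  · exact (((integrableOn_Icc_iff_integrableOn_Ioo).mpr hF).integrable_indicator
      measurableSet_Icc).intervalIntegrable
  · rw [Set.Icc_eq_empty (not_le.mpr h)]
    simp only [Set.indicator_empty]
    exact intervalIntegrable_const

lemma Mf_cast_eq (x t : ℝ) (hx : 1 ≤ x) (ht1 : 1 ≤ t) (htx : t ≤ x) :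
    ((Mf (x / t) : ℝ) : ℂ)
      = ∑ n ∈ Finset.Icc 1 ⌊x⌋₊,
          Set.indicator {s : ℝ | s ≤ x / (n:ℝ)} (fun _ => ((moebius n : ℤ) : ℂ)) t := by
  have ht0 : (0:ℝ) < t := by linarith
  have hx0 : (0:ℝ) < x := by linarith
  have hKN : ⌊x / t⌋₊ ≤ ⌊x⌋₊ := Nat.floor_le_floor (div_le_self hx0.le ht1)
  have hstep : ∀ n ∈ Finset.Icc 1 ⌊x⌋₊,
      Set.indicator {s : ℝ | s ≤ x / (n:ℝ)} (fun _ => ((moebius n : ℤ) : ℂ)) t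
        = if n ∈ Finset.Icc 1 ⌊x / t⌋₊ then ((moebius n : ℤ) : ℂ) else 0 := by
    intro n hn
    simp only [Finset.mem_Icc] at hn
    have hn0 : (0:ℝ) < n := by exact_mod_cast hn.1
    rw [Set.indicator_apply]
    congr 1
    simp only [Set.mem_setOf_eq, Finset.mem_Icc, eq_iff_iff]
    constructor
    · intro h
      refine ⟨hn.1, (Nat.le_floor_iff (by positivity)).mpr ?_⟩
      rw [le_div_iff₀ ht0]
      rw [le_div_iff₀ hn0] at h
      linarith [h]
    · rintro ⟨-, h⟩
      have h' : (n:ℝ) ≤ x / t := (Nat.le_floor_iff (by positivity)).mp h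
      rw [le_div_iff₀ ht0] at h'
      rw [le_div_iff₀ hn0]
      linarith [h']
  have hinter : Finset.Icc 1 ⌊x⌋₊ ∩ Finset.Icc 1 ⌊x / t⌋₊ = Finset.Icc 1 ⌊x / t⌋₊ := by
    ext a; simp only [Finset.mem_inter, Finset.mem_Icc]; omega
  rw [Finset.sum_congr rfl hstep, Finset.sum_ite_mem, hinter, Mf]
  push_cast
  rfl

lemma S_cast_eq (g : ℝ → ℂ) (x t : ℝ) (ht1 : 1 ≤ t) (htx : t ≤ x) :
    (∑ n ∈ Finset.Icc 1 ⌊t⌋₊, g ((n:ℝ) / t))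
      = ∑ n ∈ Finset.Icc 1 ⌊x⌋₊, (if (n:ℝ) ≤ t then g ((n:ℝ) / t) else 0) := by
  have ht0 : (0:ℝ) < t := by linarith
  have hKN : ⌊t⌋₊ ≤ ⌊x⌋₊ := Nat.floor_le_floor htx
  have hstep : ∀ n ∈ Finset.Icc 1 ⌊x⌋₊,
      (if (n:ℝ) ≤ t then g ((n:ℝ) / t) else 0)
        = if n ∈ Finset.Icc 1 ⌊t⌋₊ then g ((n:ℝ) / t) else 0 := by
    intro n hn
    simp only [Finset.mem_Icc] at hn
    congr 1
    simp only [Finset.mem_Icc, eq_iff_iff]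
    constructor
    · intro h
      exact ⟨hn.1, (Nat.le_floor_iff ht0.le).mpr h⟩
    · rintro ⟨-, h⟩
      exact (Nat.le_floor_iff ht0.le).mp h
  have hinter : Finset.Icc 1 ⌊x⌋₊ ∩ Finset.Icc 1 ⌊t⌋₊ = Finset.Icc 1 ⌊t⌋₊ := by
    ext a; simp only [Finset.mem_inter, Finset.mem_Icc]; omega
  rw [Finset.sum_congr rfl hstep, Finset.sum_ite_mem, hinter]

lemma pointwise_eq (g G : ℝ → ℂ)
    (hG : ∀ t : ℝ, G t = 1 - (1 / (t : ℂ)) * ∑ n ∈ Finset.Icc 1 ⌊t⌋₊, g (n / t))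
    (x : ℝ) (hx : 1 ≤ x) (t : ℝ) (ht : t ∈ Set.uIcc (1:ℝ) x) :
    ((Mf (x / t) * t / x : ℝ) : ℂ) * G t / t
      = (1/(x:ℂ)) * ((∑ n ∈ Finset.Icc 1 ⌊x⌋₊,
            Set.indicator {s : ℝ | s ≤ x / (n:ℝ)} (fun _ => ((moebius n : ℤ) : ℂ)) t)
          - ∑ p ∈ Finset.Icc 1 ⌊x⌋₊ ×ˢ Finset.Icc 1 ⌊x⌋₊,
              Set.indicator (Set.Icc (p.2:ℝ) (x / (p.1:ℝ)))
                (fun s => ((moebius p.1 : ℤ) : ℂ) * (g ((p.2:ℝ) / s) / s)) t) := by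
  rw [Set.uIcc_of_le hx] at ht
  obtain ⟨ht1, htx⟩ := ht
  have ht0 : (0:ℝ) < t := by linarith
  have hx0 : (0:ℝ) < x := by linarith
  have htc : (t:ℂ) ≠ 0 := by exact_mod_cast ht0.ne'
  have hxc : (x:ℂ) ≠ 0 := by exact_mod_cast hx0.ne'
  -- B as product
  have hB : ∀ p ∈ Finset.Icc 1 ⌊x⌋₊ ×ˢ Finset.Icc 1 ⌊x⌋₊,
      Set.indicator (Set.Icc (p.2:ℝ) (x / (p.1:ℝ)))
          (fun s => ((moebius p.1 : ℤ) : ℂ) * (g ((p.2:ℝ) / s) / s)) t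
        = Set.indicator {s : ℝ | s ≤ x / (p.1:ℝ)} (fun _ => ((moebius p.1 : ℤ) : ℂ)) t
            * (if (p.2:ℝ) ≤ t then g ((p.2:ℝ) / t) else 0) / t := by
    intro p _
    rw [Set.indicator_apply, Set.indicator_apply]
    simp only [Set.mem_Icc, Set.mem_setOf_eq]
    by_cases h1 : t ≤ x / (p.1:ℝ) <;> by_cases h2 : (p.2:ℝ) ≤ t <;>
      simp [h1, h2, mul_div_assoc]
  rw [Finset.sum_congr rfl hB, Finset.sum_product]
  simp only [← Finset.sum_div, ← Finset.mul_sum]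
  rw [← Finset.sum_mul, ← Mf_cast_eq x t hx ht1 htx, hG t, S_cast_eq g x t ht1 htx]
  push_cast
  field_simp

lemma A_intable (x : ℝ) (hx : 1 ≤ x) (n : ℕ) :
    IntervalIntegrable
      (Set.indicator {s : ℝ | s ≤ x / (n:ℝ)} (fun _ => ((moebius n : ℤ) : ℂ))) volume 1 x := by
  rw [intervalIntegrable_iff_integrableOn_Ioc_of_le hx]
  apply MeasureTheory.Integrable.indicator _ (measurableSet_Iic (a := x / (n:ℝ)))
  exact integrableOn_const measure_Ioc_lt_top.ne

lemma sumA_eval (x : ℝ) (hx : 1 ≤ x) :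
    (∫ t in (1:ℝ)..x, ∑ n ∈ Finset.Icc 1 ⌊x⌋₊,
        Set.indicator {s : ℝ | s ≤ x / (n:ℝ)} (fun _ => ((moebius n : ℤ) : ℂ)) t)
      = x * (mf x : ℂ) - (Mf x : ℂ) := by
  have hx0 : (0:ℝ) < x := by linarith
  rw [intervalIntegral.integral_finset_sum (fun n _ => A_intable x hx n)]
  have heval : ∀ n ∈ Finset.Icc 1 ⌊x⌋₊,
      (∫ t in (1:ℝ)..x,
          Set.indicator {s : ℝ | s ≤ x / (n:ℝ)} (fun _ => ((moebius n : ℤ) : ℂ)) t)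
        = ((x / n - 1) : ℝ) • ((moebius n : ℤ) : ℂ) := by
    intro n hn
    simp only [Finset.mem_Icc] at hn
    have hn1 : (1:ℝ) ≤ (n:ℝ) := by exact_mod_cast hn.1
    have hnx : (n:ℝ) ≤ x := le_trans (by exact_mod_cast Nat.cast_le.mpr hn.2)
      (Nat.floor_le hx0.le)
    have hmem : x / n ∈ Set.Icc (1:ℝ) x :=
      ⟨(one_le_div (by linarith)).mpr hnx, div_le_self hx0.le hn1⟩
    rw [intervalIntegral.integral_indicator hmem, intervalIntegral.integral_const]
  rw [Finset.sum_congr rfl heval, mf, Mf]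
  push_cast
  rw [Finset.mul_sum, ← Finset.sum_sub_distrib]
  refine Finset.sum_congr rfl (fun n hn => ?_)
  simp only [Finset.mem_Icc] at hn
  have hn0 : ((n:ℝ):ℂ) ≠ 0 := by
    have : (1:ℝ) ≤ (n:ℝ) := by exact_mod_cast hn.1
    exact_mod_cast (by linarith : (0:ℝ) < (n:ℝ)).ne'
  rw [Complex.real_smul]
  push_cast
  field_simp

lemma B_intable (g : ℝ → ℂ) (hg : IntegrableOn g (Set.Icc 0 1)) (x : ℝ) (hx : 1 ≤ x)
    (m n : ℕ) (hm : m ∈ Finset.Icc 1 ⌊x⌋₊) (hn : n ∈ Finset.Icc 1 ⌊x⌋₊) :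
    IntervalIntegrable
      (Set.indicator (Set.Icc (n:ℝ) (x / (m:ℝ)))
        (fun s => ((moebius m : ℤ) : ℂ) * (g ((n:ℝ) / s) / s))) volume 1 x := by
  simp only [Finset.mem_Icc] at hm hn
  have hn0 : (0:ℝ) < n := by exact_mod_cast hn.1
  apply indicator_Icc_intable
  rcases le_or_gt (n:ℝ) (x / (m:ℝ)) with h | h
  · have hb0 : (0:ℝ) < n / (x / (m:ℝ)) := by
      have : (0:ℝ) < x / (m:ℝ) := lt_of_lt_of_le hn0 h
      positivity
    exact (cov_integrable g n (x/(m:ℝ)) hn0 h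
      (integrable_g_div g hg _ hb0)).const_mul _
  · rw [Set.Ioo_eq_empty (not_lt.mpr h.le)]
    exact integrableOn_empty

lemma B_eval (g : ℝ → ℂ) (hg : IntegrableOn g (Set.Icc 0 1)) (x : ℝ) (hx : 1 ≤ x)
    (m n : ℕ) (hm : m ∈ Finset.Icc 1 ⌊x⌋₊) (hn : n ∈ Finset.Icc 1 ⌊x⌋₊) :
    (∫ t in (1:ℝ)..x, Set.indicator (Set.Icc (n:ℝ) (x / (m:ℝ)))
        (fun s => ((moebius m : ℤ) : ℂ) * (g ((n:ℝ) / s) / s)) t)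
      = if m * n ≤ ⌊x⌋₊ then
          ((moebius m : ℤ) : ℂ) * ∫ u in Set.Ioo (((m*n : ℕ):ℝ)/x) 1, g u / u
        else 0 := by
  have hx0 : (0:ℝ) < x := by linarith
  simp only [Finset.mem_Icc] at hm hn
  have hm0 : (0:ℝ) < m := by exact_mod_cast hm.1
  have hn0 : (0:ℝ) < n := by exact_mod_cast hn.1
  have hn1 : (1:ℝ) ≤ n := by exact_mod_cast hn.1
  have hmx : (m:ℝ) ≤ x := le_trans (by exact_mod_cast Nat.cast_le.mpr hm.2) (Nat.floor_le hx0.le)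
  rw [interval_indicator_Icc _ x _ _ hx hn1 (div_le_self hx0.le (by exact_mod_cast hm.1))]
  split_ifs with hcase
  · have hmn : ((m*n : ℕ):ℝ) ≤ x :=
      le_trans (by exact_mod_cast Nat.cast_le.mpr hcase) (Nat.floor_le hx0.le)
    have hmn' : (n:ℝ) ≤ x / (m:ℝ) := by
      rw [le_div_iff₀ hm0]
      push_cast at hmn
      linarith [hmn]
    rw [MeasureTheory.integral_const_mul, cov_integral g n (x/(m:ℝ)) hn0 hmn']
    congr 2
    rw [div_div_eq_mul_div]
    push_cast
    ring
  · have hmn : x < ((m*n : ℕ):ℝ) := by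
      have h1 : ⌊x⌋₊ < m * n := by omega
      calc x < (⌊x⌋₊ + 1 : ℕ) := Nat.lt_succ_floor x
      _ ≤ ((m*n : ℕ):ℝ) := by exact_mod_cast Nat.cast_le.mpr h1
    have : x / (m:ℝ) < n := by
      rw [div_lt_iff₀ hm0]
      push_cast at hmn
      linarith [hmn]
    rw [Set.Ioo_eq_empty (not_lt.mpr this.le)]
    simp

set_option maxHeartbeats 1600000 in
theorem stmt_6 (g : ℝ → ℂ) (hg : IntegrableOn g (Set.Icc 0 1))
    (hg1 : ∫ y in (0:ℝ)..1, g y = 1)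
    (G : ℝ → ℂ) (hG : ∀ t : ℝ, G t = 1 - (1 / (t : ℂ)) * ∑ n ∈ Finset.Icc 1 ⌊t⌋₊, g (n / t))
    (x : ℝ) (hx : 1 ≤ x) :
    (mf x - Mf x / x : ℂ)
      = (∫ t in (1:ℝ)..x, (Mf (x / t) * t / x : ℝ) * G t / t)
        + (1 / (x : ℂ)) * ∫ y in (1/x:ℝ)..1, g y / y := by
  have hx0 : (0:ℝ) < x := by linarith
  have hxc : (x:ℂ) ≠ 0 := by exact_mod_cast hx0.ne'
  have hN1 : 1 ≤ ⌊x⌋₊ := Nat.le_floor (by exact_mod_cast hx)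
  set c : ℕ → ℂ := fun k => ∫ u in Set.Ioo (((k:ℕ):ℝ)/x) 1, g u / u with hc
  have hcongr : (∫ t in (1:ℝ)..x, ((Mf (x / t) * t / x : ℝ) : ℂ) * G t / t)
      = ∫ t in (1:ℝ)..x, (1/(x:ℂ)) *
          ((∑ n ∈ Finset.Icc 1 ⌊x⌋₊,
              Set.indicator {s : ℝ | s ≤ x / (n:ℝ)} (fun _ => ((moebius n : ℤ) : ℂ)) t)
            - ∑ p ∈ Finset.Icc 1 ⌊x⌋₊ ×ˢ Finset.Icc 1 ⌊x⌋₊,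
                Set.indicator (Set.Icc (p.2:ℝ) (x / (p.1:ℝ)))
                  (fun s => ((moebius p.1 : ℤ) : ℂ) * (g ((p.2:ℝ) / s) / s)) t) :=
    intervalIntegral.integral_congr (fun t ht => pointwise_eq g G hG x hx t ht)
  have hIA : IntervalIntegrable (fun t => ∑ n ∈ Finset.Icc 1 ⌊x⌋₊,
      Set.indicator {s : ℝ | s ≤ x / (n:ℝ)} (fun _ => ((moebius n : ℤ) : ℂ)) t) volume 1 x := by
    rw [intervalIntegrable_iff_integrableOn_Ioc_of_le hx]
    exact MeasureTheory.integrable_finset_sum _ (fun n _ =>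
      (intervalIntegrable_iff_integrableOn_Ioc_of_le hx).mp (A_intable x hx n))
  have hIB : IntervalIntegrable (fun t => ∑ p ∈ Finset.Icc 1 ⌊x⌋₊ ×ˢ Finset.Icc 1 ⌊x⌋₊,
      Set.indicator (Set.Icc (p.2:ℝ) (x / (p.1:ℝ)))
        (fun s => ((moebius p.1 : ℤ) : ℂ) * (g ((p.2:ℝ) / s) / s)) t) volume 1 x := by
    rw [intervalIntegrable_iff_integrableOn_Ioc_of_le hx]
    exact MeasureTheory.integrable_finset_sum _ (fun p hp =>
      (intervalIntegrable_iff_integrableOn_Ioc_of_le hx).mp (B_intable g hg x hx p.1 p.2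
        (Finset.mem_product.mp hp).1 (Finset.mem_product.mp hp).2))
  have hsplit : (∫ t in (1:ℝ)..x, ((Mf (x / t) * t / x : ℝ) : ℂ) * G t / t)
      = (1/(x:ℂ)) * ((x * (mf x : ℂ) - (Mf x : ℂ)) - c 1) := by
    rw [hcongr, intervalIntegral.integral_const_mul, intervalIntegral.integral_sub hIA hIB]
    congr 1
    rw [sumA_eval x hx]
    congr 1
    have hfs := intervalIntegral.integral_finset_sum (a := (1:ℝ)) (b := x)
      (s := Finset.Icc 1 ⌊x⌋₊ ×ˢ Finset.Icc 1 ⌊x⌋₊)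
      (f := fun p t => Set.indicator (Set.Icc (p.2:ℝ) (x / (p.1:ℝ)))
        (fun s => ((moebius p.1 : ℤ) : ℂ) * (g ((p.2:ℝ) / s) / s)) t)
      (fun p hp => B_intable g hg x hx p.1 p.2
        (Finset.mem_product.mp hp).1 (Finset.mem_product.mp hp).2)
    rw [hfs]
    have heval : ∀ p ∈ Finset.Icc 1 ⌊x⌋₊ ×ˢ Finset.Icc 1 ⌊x⌋₊,
        (∫ t in (1:ℝ)..x, Set.indicator (Set.Icc (p.2:ℝ) (x / (p.1:ℝ)))
            (fun s => ((moebius p.1 : ℤ) : ℂ) * (g ((p.2:ℝ) / s) / s)) t)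
          = if p.1 * p.2 ≤ ⌊x⌋₊ then ((moebius p.1 : ℤ) : ℂ) * c (p.1 * p.2) else 0 :=
      fun p hp => B_eval g hg x hx p.1 p.2
        (Finset.mem_product.mp hp).1 (Finset.mem_product.mp hp).2
    rw [Finset.sum_congr rfl heval, Finset.sum_product]
    exact pair_sum ⌊x⌋₊ hN1 c
  have hc1 : (∫ y in (1/x:ℝ)..1, g y / y) = c 1 := by
    rw [hc]
    have h1x : (1/x:ℝ) ≤ 1 := by
      rw [div_le_one hx0]; exact hx
    rw [intervalIntegral.integral_of_le h1x, integral_Ioc_eq_integral_Ioo]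
    norm_num
  rw [hsplit, hc1]
  push_cast
  field_simp
  ring
end

section
/- Let F : [1,∞) → ℝ₊ be a nonnegative function, let T > 1 and j > 0 be real numbers. Then for every x ≥ T, (1/log^j x) ∫₁^{x/T} F(t) t^{−1} dt ≤ ∫₁^{x/T} F(t) t^{−1} / log^j(x/t) dt ≤ (1/log^j x) ∫₁^{x/T} F(t) t^{−1 + j/log T} dt. -/
open Finset MeasureTheory Real

theorem stmt_9 (F : ℝ → ℝ) (hF : ∀ t, 1 ≤ t → 0 ≤ F t)
    (T j : ℝ) (hT : 1 < T) (hj : 0 < j) (x : ℝ) (hx : T ≤ x) :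
    (1 / Real.log x ^ j) * (∫ t in (1:ℝ)..(x/T), F t * t⁻¹)
      ≤ ∫ t in (1:ℝ)..(x/T), F t * t⁻¹ / Real.log (x / t) ^ j ∧
    (∫ t in (1:ℝ)..(x/T), F t * t⁻¹ / Real.log (x / t) ^ j)
      ≤ (1 / Real.log x ^ j) * ∫ t in (1:ℝ)..(x/T), F t * t ^ (-1 + j / Real.log T) := by
  have hT0 : (0:ℝ) < T := by linarith
  have hlT : 0 < Real.log T := Real.log_pos hT
  have hx1 : (1:ℝ) < x := lt_of_lt_of_le hT hx
  have hx0 : (0:ℝ) < x := by linarith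
  have hlx : 0 < Real.log x := Real.log_pos hx1
  have hb1 : (1:ℝ) ≤ x / T := (one_le_div hT0).2 hx
  set c := j / Real.log T with hc
  have hc0 : 0 < c := div_pos hj hlT
  -- basic facts on the interval
  have hmem : ∀ t ∈ Set.Icc (1:ℝ) (x/T), (0:ℝ) < t ∧ Real.log T ≤ Real.log (x/t)
      ∧ Real.log (x/t) ≤ Real.log x := by
    rintro t ⟨ht1, ht2⟩
    have ht0 : (0:ℝ) < t := by linarith
    have h1 : T ≤ x / t := by
      rw [le_div_iff₀ ht0]
      calc T * t ≤ T * (x / T) := by nlinarith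
        _ = x := by field_simp
    have h2 : x / t ≤ x := div_le_self hx0.le ht1
    exact ⟨ht0, Real.log_le_log hT0 h1, Real.log_le_log (by positivity) h2⟩
  -- the key inequality
  have key : ∀ t ∈ Set.Icc (1:ℝ) (x/T),
      Real.log x ^ j ≤ t ^ c * Real.log (x/t) ^ j := by
    intro t ht
    obtain ⟨ht0, hL1, _⟩ := hmem t ht
    have ht1 : (1:ℝ) ≤ t := ht.1
    have hs : 0 ≤ Real.log t := Real.log_nonneg ht1
    have hL0 : 0 < Real.log (x/t) := lt_of_lt_of_le hlT hL1
    have hsplit : Real.log x = Real.log (x/t) + Real.log t := by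
      rw [Real.log_div (ne_of_gt hx0) (ne_of_gt ht0)]; ring
    have hexp : 1 + Real.log t / Real.log T ≤ t ^ ((Real.log T)⁻¹) := by
      rw [Real.rpow_def_of_pos ht0]
      have h := Real.add_one_le_exp (Real.log t * (Real.log T)⁻¹)
      rw [div_eq_mul_inv]
      linarith
    have htpos : 0 < t ^ ((Real.log T)⁻¹) := Real.rpow_pos_of_pos ht0 _
    have h1 : Real.log x ≤ Real.log (x/t) * t ^ ((Real.log T)⁻¹) := by
      have h2 : Real.log t / Real.log T * Real.log (x/t) ≥ Real.log t := by
        rw [ge_iff_le, div_mul_eq_mul_div, le_div_iff₀ hlT]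
        nlinarith
      nlinarith [mul_le_mul_of_nonneg_left hexp hL0.le]
    calc Real.log x ^ j ≤ (Real.log (x/t) * t ^ ((Real.log T)⁻¹)) ^ j :=
          Real.rpow_le_rpow hlx.le h1 hj.le
      _ = Real.log (x/t) ^ j * (t ^ ((Real.log T)⁻¹)) ^ j :=
          Real.mul_rpow hL0.le htpos.le
      _ = t ^ c * Real.log (x/t) ^ j := by
          rw [← Real.rpow_mul ht0.le, hc, inv_mul_eq_div, mul_comm]
  -- pointwise inequalities
  have pw1 : ∀ t ∈ Set.Icc (1:ℝ) (x/T),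
      (fun t => 1 / Real.log x ^ j * (F t * t⁻¹)) t
        ≤ (fun t => F t * t⁻¹ / Real.log (x/t) ^ j) t := by
    intro t ht
    obtain ⟨ht0, hL1, hL2⟩ := hmem t ht
    have hL0 : 0 < Real.log (x/t) := lt_of_lt_of_le hlT hL1
    have hFt : 0 ≤ F t * t⁻¹ := mul_nonneg (hF t ht.1) (by positivity)
    have h : (Real.log x ^ j)⁻¹ ≤ (Real.log (x/t) ^ j)⁻¹ := by
      apply inv_anti₀ (Real.rpow_pos_of_pos hL0 j)
      exact Real.rpow_le_rpow hL0.le hL2 hj.le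
    calc 1 / Real.log x ^ j * (F t * t⁻¹) = (F t * t⁻¹) * (Real.log x ^ j)⁻¹ := by ring
      _ ≤ (F t * t⁻¹) * (Real.log (x/t) ^ j)⁻¹ := mul_le_mul_of_nonneg_left h hFt
      _ = F t * t⁻¹ / Real.log (x/t) ^ j := (div_eq_mul_inv _ _).symm
  have pw2 : ∀ t ∈ Set.Icc (1:ℝ) (x/T),
      (fun t => F t * t⁻¹ / Real.log (x/t) ^ j) t
        ≤ (fun t => 1 / Real.log x ^ j * (F t * t ^ (-1 + c))) t := by
    intro t ht
    obtain ⟨ht0, hL1, hL2⟩ := hmem t ht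
    have hL0 : 0 < Real.log (x/t) := lt_of_lt_of_le hlT hL1
    have hLj : 0 < Real.log (x/t) ^ j := Real.rpow_pos_of_pos hL0 j
    have hXj : 0 < Real.log x ^ j := Real.rpow_pos_of_pos hlx j
    have hFt : 0 ≤ F t * t⁻¹ := mul_nonneg (hF t ht.1) (by positivity)
    have hsplit : t ^ (-1 + c) = t⁻¹ * t ^ c := by
      rw [Real.rpow_add ht0, Real.rpow_neg ht0.le, Real.rpow_one]
    have hk := key t ht
    simp only [hsplit, one_div]
    rw [div_le_iff₀ hLj]
    have : F t * t⁻¹ * Real.log x ^ j ≤ F t * t⁻¹ * (t ^ c * Real.log (x/t) ^ j) :=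
      mul_le_mul_of_nonneg_left hk hFt
    calc F t * t⁻¹ = F t * t⁻¹ * Real.log x ^ j * (Real.log x ^ j)⁻¹ := by
          rw [mul_assoc, mul_inv_cancel₀ (ne_of_gt hXj), mul_one]
      _ ≤ F t * t⁻¹ * (t ^ c * Real.log (x/t) ^ j) * (Real.log x ^ j)⁻¹ :=
          mul_le_mul_of_nonneg_right this (inv_nonneg.2 hXj.le)
      _ = (Real.log x ^ j)⁻¹ * (F t * (t⁻¹ * t ^ c)) * Real.log (x/t) ^ j := by ring
  -- continuity facts
  have hIcc : Set.uIcc (1:ℝ) (x/T) = Set.Icc 1 (x/T) := Set.uIcc_of_le hb1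
  have hIoc : Set.uIoc (1:ℝ) (x/T) = Set.Ioc 1 (x/T) := Set.uIoc_of_le hb1
  have hclog : ContinuousOn (fun t => Real.log (x/t)) (Set.uIcc (1:ℝ) (x/T)) := by
    rw [hIcc]
    apply ContinuousOn.log
    · exact continuousOn_const.div continuousOn_id fun t ht => by
        have := ht.1; intro h; simp [h] at this; linarith
    · intro t ht
      exact ne_of_gt (div_pos hx0 (hmem t ht).1)
  have hclogj : ContinuousOn (fun t => Real.log (x/t) ^ j) (Set.uIcc (1:ℝ) (x/T)) :=
    hclog.rpow_const fun t _ => Or.inr hj.le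
  by_cases hg : IntervalIntegrable (fun t => F t * t⁻¹) volume 1 (x/T)
  · -- integrable case
    have hh : IntervalIntegrable (fun t => F t * t⁻¹ / Real.log (x/t) ^ j) volume 1 (x/T) := by
      have hcinv : ContinuousOn (fun t => (Real.log (x/t) ^ j)⁻¹) (Set.uIcc (1:ℝ) (x/T)) := by
        apply hclogj.inv₀
        intro t ht
        rw [hIcc] at ht
        have := lt_of_lt_of_le hlT (hmem t ht).2.1
        exact ne_of_gt (Real.rpow_pos_of_pos this j)
      have := hg.mul_continuousOn hcinv
      simpa [div_eq_mul_inv] using this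
    have hcpow : ContinuousOn (fun t : ℝ => t ^ c) (Set.uIcc (1:ℝ) (x/T)) :=
      continuousOn_id.rpow_const fun t _ => Or.inr hc0.le
    have hk : IntervalIntegrable (fun t => F t * t ^ (-1 + c)) volume 1 (x/T) := by
      refine (hg.mul_continuousOn hcpow).congr ?_
      rw [hIoc]
      intro t ht
      beta_reduce
      have ht0 : (0:ℝ) < t := lt_trans one_pos ht.1
      rw [Real.rpow_add ht0, Real.rpow_neg ht0.le, Real.rpow_one]
      ring
    constructor
    · rw [← intervalIntegral.integral_const_mul]
      exact intervalIntegral.integral_mono_on hb1 (hg.const_mul _) hh pw1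
    · rw [← intervalIntegral.integral_const_mul]
      exact intervalIntegral.integral_mono_on hb1 hh (hk.const_mul _) pw2
  · -- non-integrable case: all integrals are zero
    have hh : ¬ IntervalIntegrable (fun t => F t * t⁻¹ / Real.log (x/t) ^ j) volume 1 (x/T) := by
      intro hh
      apply hg
      refine (hh.mul_continuousOn hclogj).congr ?_
      rw [hIoc]
      intro t ht
      have ht' : t ∈ Set.Icc (1:ℝ) (x/T) := Set.Ioc_subset_Icc_self ht
      have hL0 : 0 < Real.log (x/t) := lt_of_lt_of_le hlT (hmem t ht').2.1
      have hLj : Real.log (x/t) ^ j ≠ 0 := ne_of_gt (Real.rpow_pos_of_pos hL0 j)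
      exact div_mul_cancel₀ (F t * t⁻¹) hLj
    have hk : ¬ IntervalIntegrable (fun t => F t * t ^ (-1 + c)) volume 1 (x/T) := by
      intro hk
      apply hg
      have hcpow : ContinuousOn (fun t : ℝ => t ^ (-c)) (Set.uIcc (1:ℝ) (x/T)) := by
        rw [hIcc]
        exact continuousOn_id.rpow_const fun t ht => Or.inl (by
          simp only [id]
          exact ne_of_gt (lt_of_lt_of_le one_pos ht.1))
      refine (hk.mul_continuousOn hcpow).congr ?_
      rw [hIoc]
      intro t ht
      beta_reduce
      have ht0 : (0:ℝ) < t := lt_trans one_pos ht.1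
      have hcc : (-1 + c) + (-c) = (-1 : ℝ) := by ring
      rw [mul_assoc, ← Real.rpow_add ht0, hcc, Real.rpow_neg ht0.le, Real.rpow_one]
    rw [intervalIntegral.integral_undef hg, intervalIntegral.integral_undef hh,
      intervalIntegral.integral_undef hk]
    norm_num
end

section
/- Let g₁(y) = 4y(1−y²) and G₁(t) = 1 − (1/t) Σ_{n≤t} g₁(n/t) for t ≥ 1. Then ∫₁^∞ G₁(t) t^{−1} dt = 3/4 − γ, where γ is the Euler–Mascheroni constant. -/
open Finset MeasureTheory Real

noncomputable def g₁ (y : ℝ) : ℝ := 4 * y * (1 - y ^ 2)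

noncomputable def G₁ (t : ℝ) : ℝ := 1 - (1 / t) * ∑ n ∈ Finset.Icc 1 ⌊t⌋₊, g₁ (n / t)

lemma sum_id_real (N : ℕ) : (∑ n ∈ Finset.Icc 1 N, (n : ℝ)) = N * (N + 1) / 2 := by
  induction N with
  | zero => simp
  | succ M ih =>
    rw [Finset.sum_Icc_succ_top (by omega)] at *
    rw [ih]; push_cast; ring

lemma sum_cube_real (N : ℕ) : (∑ n ∈ Finset.Icc 1 N, (n : ℝ) ^ 3) = (N * (N + 1) / 2) ^ 2 := by
  induction N with
  | zero => simp
  | succ M ih =>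
    rw [Finset.sum_Icc_succ_top (by omega)] at *
    rw [ih]; push_cast; ring

/-- Closed form for G₁. -/
lemma G₁_eq (t : ℝ) (ht : t ≠ 0) :
    G₁ t = (1 - (⌊t⌋₊ * (⌊t⌋₊ + 1)) / t ^ 2) ^ 2 := by
  have h1 : (∑ n ∈ Finset.Icc 1 ⌊t⌋₊, g₁ (n / t))
      = (4 / t) * (∑ n ∈ Finset.Icc 1 ⌊t⌋₊, (n : ℝ))
        - (4 / t ^ 3) * (∑ n ∈ Finset.Icc 1 ⌊t⌋₊, (n : ℝ) ^ 3) := by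
    rw [Finset.mul_sum, Finset.mul_sum, ← Finset.sum_sub_distrib]
    refine Finset.sum_congr rfl fun n _ => ?_
    unfold g₁
    field_simp
  unfold G₁
  rw [h1, sum_id_real, sum_cube_real]
  field_simp
  ring

lemma sq_sub_le (t : ℝ) (ht : 1 ≤ t) :
    (1 - (⌊t⌋₊ * (⌊t⌋₊ + 1)) / t ^ 2) ^ 2 ≤ 4 / t ^ 2 := by
  have hN1 : 1 ≤ ⌊t⌋₊ := Nat.le_floor (by exact_mod_cast ht)
  have hNt : ((⌊t⌋₊ : ℝ)) ≤ t := Nat.floor_le (by linarith)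
  have htN : t < (⌊t⌋₊ : ℝ) + 1 := Nat.lt_floor_add_one t
  have hNpos : (0:ℝ) < ⌊t⌋₊ := by exact_mod_cast hN1
  have ht0 : (0:ℝ) < t := by linarith
  set N : ℝ := (⌊t⌋₊ : ℝ)
  have ht2 : (0:ℝ) < t ^ 2 := by positivity
  have key : (t ^ 2 - N * (N + 1)) ^ 2 ≤ 4 * t ^ 2 := by
    have hu : t ^ 2 - N * (N + 1) ≤ 2 * t := by nlinarith
    have hl : -(2 * t) ≤ t ^ 2 - N * (N + 1) := by nlinarith
    nlinarith
  have expand : (1 - (N * (N + 1)) / t ^ 2) ^ 2 = (t ^ 2 - N * (N + 1)) ^ 2 / (t ^ 2) ^ 2 := by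
    field_simp
  rw [expand, div_le_div_iff₀ (by positivity) ht2]
  nlinarith

lemma integrableE : IntegrableOn (fun t : ℝ => G₁ t / t) (Set.Ici 1) := by
  have hm : Measurable fun t : ℝ => (1 - ((⌊t⌋₊ : ℝ) * ((⌊t⌋₊ : ℝ) + 1)) / t ^ 2) ^ 2 / t := by
    have h1 : Measurable fun t : ℝ => ((⌊t⌋₊ : ℝ)) :=
      measurable_from_top.comp Nat.measurable_floor
    fun_prop
  have hint : IntegrableOn (fun t : ℝ => 4 * t ^ (-3 : ℝ)) (Set.Ici 1) := by
    rw [integrableOn_Ici_iff_integrableOn_Ioi]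
    exact (integrableOn_Ioi_rpow_of_lt (by norm_num) one_pos).const_mul 4
  have hbig : IntegrableOn
      (fun t : ℝ => (1 - ((⌊t⌋₊ : ℝ) * ((⌊t⌋₊ : ℝ) + 1)) / t ^ 2) ^ 2 / t) (Set.Ici 1) := by
    refine MeasureTheory.Integrable.mono hint (hm.aestronglyMeasurable.restrict) ?_
    rw [ae_restrict_iff' measurableSet_Ici]
    refine Filter.Eventually.of_forall fun t ht => ?_
    have ht1 : (1:ℝ) ≤ t := ht
    have ht0 : (0:ℝ) < t := by linarith
    have hb := sq_sub_le t ht1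
    have hg : 4 * t ^ (-3 : ℝ) = 4 / t ^ 3 := by
      rw [show (-3:ℝ) = -((3:ℕ):ℝ) by norm_num, Real.rpow_neg ht0.le, Real.rpow_natCast]
      ring
    rw [hg, Real.norm_eq_abs, Real.norm_eq_abs, abs_of_nonneg (by positivity),
      abs_of_nonneg (by positivity)]
    have hb' : (1 - ((⌊t⌋₊ : ℝ) * ((⌊t⌋₊ : ℝ) + 1)) / t ^ 2) ^ 2 * t ^ 2 ≤ 4 := by
      rw [← le_div_iff₀ (by positivity)]
      exact_mod_cast hb
    rw [div_le_div_iff₀ ht0 (by positivity)]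
    nlinarith [mul_le_mul_of_nonneg_right hb' ht0.le]
  refine hbig.congr_fun (fun t ht => ?_) measurableSet_Ici
  have ht0 : t ≠ 0 := by
    have : (1:ℝ) ≤ t := ht
    linarith
  rw [G₁_eq t ht0]

/-- Interval integral over [N, N+1]. -/
lemma intervalB (N : ℕ) (hN : 1 ≤ N) :
    ∫ t in (N : ℝ)..(N + 1), G₁ t / t
      = (Real.log (N + 1) + N / (N + 1) - N ^ 2 / (4 * (N + 1) ^ 2))
        - (Real.log N + (N + 1) / N - (N + 1) ^ 2 / (4 * N ^ 2)) := by
  have hN0 : (0:ℝ) < N := by exact_mod_cast hN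
  set a : ℝ := N * (N + 1) with ha
  have hle : (N:ℝ) ≤ (N:ℝ) + 1 := by linarith
  -- the integrand agrees a.e. with an explicit function on the interval
  have hcongr : ∫ t in (N : ℝ)..(N + 1), G₁ t / t
      = ∫ t in (N : ℝ)..(N + 1), (1 - a / t ^ 2) ^ 2 / t := by
    refine intervalIntegral.integral_congr_ae ?_
    have hae : ∀ᵐ t : ℝ, t ≠ (N:ℝ) + 1 := by
      refine (MeasureTheory.compl_mem_ae_iff).mpr ?_
      convert (measure_singleton ((N:ℝ) + 1) : volume ({(N:ℝ) + 1} : Set ℝ) = 0) using 3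
      rfl
    filter_upwards [hae] with t htne htmem
    rw [Set.uIoc_of_le hle] at htmem
    have ht1 : (N:ℝ) < t := htmem.1
    have ht2 : t < (N:ℝ) + 1 := lt_of_le_of_ne htmem.2 htne
    have ht0 : t ≠ 0 := by linarith
    have hfl : ⌊t⌋₊ = N := by
      rw [Nat.floor_eq_iff (by linarith)]
      exact ⟨by linarith, by linarith⟩
    rw [G₁_eq t ht0, hfl]
  rw [hcongr]
  -- antiderivative
  have hderiv : ∀ t ∈ Set.uIcc (N:ℝ) ((N:ℝ) + 1),
      HasDerivAt (fun t : ℝ => Real.log t + a / t ^ 2 - a ^ 2 / (4 * t ^ 4))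
        ((1 - a / t ^ 2) ^ 2 / t) t := by
    intro t htmem
    rw [Set.uIcc_of_le hle] at htmem
    have ht0 : (0:ℝ) < t := lt_of_lt_of_le hN0 htmem.1
    have h1 : HasDerivAt Real.log t⁻¹ t := Real.hasDerivAt_log ht0.ne'
    have h2 : HasDerivAt (fun t : ℝ => a / t ^ 2)
        ((0 * t ^ 2 - a * (2 * t ^ 1)) / (t ^ 2) ^ 2) t :=
      (hasDerivAt_const t a).div (hasDerivAt_pow 2 t) (by positivity)
    have h3 : HasDerivAt (fun t : ℝ => a ^ 2 / (4 * t ^ 4))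
        ((0 * (4 * t ^ 4) - a ^ 2 * (4 * (4 * t ^ 3))) / (4 * t ^ 4) ^ 2) t :=
      (hasDerivAt_const t (a ^ 2)).div ((hasDerivAt_pow 4 t).const_mul 4) (by positivity)
    have ht0' : t ≠ 0 := ht0.ne'
    have e : (1 - a / t ^ 2) ^ 2 / t = t⁻¹ + (0 * t ^ 2 - a * (2 * t ^ 1)) / (t ^ 2) ^ 2
        - (0 * (4 * t ^ 4) - a ^ 2 * (4 * (4 * t ^ 3))) / (4 * t ^ 4) ^ 2 := by
      field_simp
      ring
    rw [e]
    exact (h1.add h2).sub h3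
  have hcont : IntervalIntegrable (fun t : ℝ => (1 - a / t ^ 2) ^ 2 / t)
      volume (N:ℝ) ((N:ℝ) + 1) := by
    refine ContinuousOn.intervalIntegrable ?_
    have hne : ∀ t ∈ Set.uIcc (N:ℝ) ((N:ℝ) + 1), t ≠ 0 := by
      intro t htmem
      rw [Set.uIcc_of_le hle] at htmem
      have : (0:ℝ) < t := lt_of_lt_of_le hN0 htmem.1
      exact this.ne'
    have hne2 : ∀ t ∈ Set.uIcc (N:ℝ) ((N:ℝ) + 1), t ^ 2 ≠ 0 :=
      fun t ht => pow_ne_zero 2 (hne t ht)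
    exact ((continuousOn_const.sub (continuousOn_const.div
      ((continuous_pow 2).continuousOn) hne2)).pow 2).div continuousOn_id hne
  rw [intervalIntegral.integral_eq_sub_of_hasDerivAt hderiv hcont]
  have hN1 : ((N:ℝ) + 1) ≠ 0 := by positivity
  field_simp
  ring

lemma partialC (M : ℕ) :
    ∫ t in (1 : ℝ)..(M + 1), G₁ t / t
      = Real.log (M + 1) - (harmonic M : ℝ) + 3 / 4 - 1 / (2 * (M + 1)) - 1 / (4 * (M + 1) ^ 2) := by
  have key : ∀ x y : ℝ, 1 ≤ x → x ≤ y →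
      IntervalIntegrable (fun t => G₁ t / t) volume x y := by
    intro x y hx hxy
    refine IntegrableOn.intervalIntegrable (integrableE.mono_set ?_)
    rw [Set.uIcc_of_le hxy]
    exact fun z hz => le_trans hx hz.1
  induction M with
  | zero => simp; norm_num
  | succ M ih =>
    have hM1 : (1:ℝ) ≤ (M:ℝ) + 1 := by
      have : (0:ℝ) ≤ (M:ℝ) := Nat.cast_nonneg M
      linarith
    have hsplit := intervalIntegral.integral_add_adjacent_intervals
      (key 1 ((M:ℝ) + 1) le_rfl hM1)
      (key ((M:ℝ) + 1) ((M:ℝ) + 2) (by linarith) (by linarith))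
      (f := fun t => G₁ t / t)
    have hB := intervalB (M + 1) (by omega)
    push_cast at hB ⊢
    rw [show ((M:ℝ) + 1 + 1) = (M:ℝ) + 2 by ring] at *
    rw [← hsplit, ih, hB, harmonic_succ]
    push_cast
    have h1 : ((M:ℝ) + 1) ≠ 0 := by positivity
    have h2 : ((M:ℝ) + 2) ≠ 0 := by positivity
    field_simp
    ring

theorem stmt_10 :
    ∫ t in Set.Ici (1:ℝ), G₁ t / t = 3 / 4 - Real.eulerMascheroniConstant := by
  have hseq : Filter.Tendsto (fun M : ℕ => ((M:ℝ) + 1)) Filter.atTop Filter.atTop :=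
    Filter.tendsto_atTop_add_const_right _ 1 tendsto_natCast_atTop_atTop
  rw [MeasureTheory.integral_Ici_eq_integral_Ioi]
  have h1 : Filter.Tendsto (fun M : ℕ => ∫ t in (1:ℝ)..((M:ℝ) + 1), G₁ t / t)
      Filter.atTop (nhds (∫ t in Set.Ioi (1:ℝ), G₁ t / t)) :=
    MeasureTheory.intervalIntegral_tendsto_integral_Ioi 1
      (integrableE.mono_set Set.Ioi_subset_Ici_self) hseq
  have hz1 : Filter.Tendsto (fun M : ℕ => 1 / (2 * ((M:ℝ) + 1))) Filter.atTop (nhds 0) := by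
    simp only [one_div]
    exact (hseq.const_mul_atTop (by norm_num : (0:ℝ) < 2)).inv_tendsto_atTop
  have hz2 : Filter.Tendsto (fun M : ℕ => 1 / (4 * ((M:ℝ) + 1) ^ 2)) Filter.atTop (nhds 0) := by
    simp only [one_div]
    refine Filter.Tendsto.inv_tendsto_atTop ?_
    refine Filter.tendsto_atTop_mono (fun M => ?_) (hseq.const_mul_atTop (by norm_num : (0:ℝ) < 4))
    have h0 : (1:ℝ) ≤ (M:ℝ) + 1 := by
      have := Nat.cast_nonneg (α := ℝ) M
      linarith
    nlinarith
  have h2 : Filter.Tendsto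
      (fun M : ℕ => Real.log ((M:ℝ) + 1) - (harmonic M : ℝ) + 3 / 4
        - 1 / (2 * ((M:ℝ) + 1)) - 1 / (4 * ((M:ℝ) + 1) ^ 2))
      Filter.atTop (nhds (3 / 4 - Real.eulerMascheroniConstant)) := by
    have h3 := (tendsto_const_nhds (x := (3/4 : ℝ)) (f := Filter.atTop (α := ℕ))).sub
      Real.tendsto_harmonic_sub_log_add_one
    have h4 := (h3.sub hz1).sub hz2
    rw [sub_zero, sub_zero] at h4
    refine h4.congr fun M => ?_
    ring
  have h1' : Filter.Tendsto
      (fun M : ℕ => Real.log ((M:ℝ) + 1) - (harmonic M : ℝ) + 3 / 4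
        - 1 / (2 * ((M:ℝ) + 1)) - 1 / (4 * ((M:ℝ) + 1) ^ 2))
      Filter.atTop (nhds (∫ t in Set.Ioi (1:ℝ), G₁ t / t)) := by
    refine h1.congr fun M => ?_
    exact partialC M
  exact tendsto_nhds_unique h1' h2
end
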